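/- arXiv:2409.01070 — 3 statements merged into one kernel-verified Lean document; each statement's English description precedes it below -/
import Mathlib

section
/- Let Ω ⊂ ℂ̂ be a multiply connected domain of connectivity greater than two, and let π : 𝔻 → Ω be a universal covering with deck transformation group Γ. If the radial limit π*(e^{iθ}) of π at e^{iθ} ∈ ∂𝔻 exists, then e^{iθ} ∈ ∂𝔻 ∖ Λ_NT. -/
open Complex Metric Set Filter Topology OnePoint MeasureTheory

noncomputable section

/-- The Riemann sphere, modelled as the one-point compactification of `ℂ`. -/
abbrev RSphere : Type := OnePoint ℂ

/-- The open unit disk `𝔻` as a subset of `ℂ`. -/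
def unitD : Set ℂ := Metric.ball 0 1

/-- The unit circle `∂𝔻`. -/
def unitC : Set ℂ := Metric.sphere 0 1

/-- A map into the Riemann sphere is holomorphic (meromorphic) at `z` if near `z` it is either
given by an analytic `ℂ`-valued function, or its reciprocal is (with value `∞` at zeros). -/
def SphHolomorphicAt (f : ℂ → RSphere) (z : ℂ) : Prop :=
  (∃ g : ℂ → ℂ, AnalyticAt ℂ g z ∧ ∀ᶠ w in 𝓝 z, f w = (g w : RSphere)) ∨
  (∃ g : ℂ → ℂ, AnalyticAt ℂ g z ∧ g z = 0 ∧
     ∀ᶠ w in 𝓝 z, (g w = 0 → f w = ∞) ∧ (g w ≠ 0 → f w = (((g w)⁻¹ : ℂ) : RSphere)))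

def SphHolomorphicOn (f : ℂ → RSphere) (s : Set ℂ) : Prop :=
  ∀ z ∈ s, SphHolomorphicAt f z

/-- A domain: an open connected subset of the Riemann sphere. -/
structure IsSphDomain (Ω : Set RSphere) : Prop where
  isOpen : IsOpen Ω
  isConnected : IsConnected Ω

/-- A hyperbolic domain: omits at least three points of the sphere. -/
def IsHyperbolicDomain (Ω : Set RSphere) : Prop :=
  IsSphDomain Ω ∧ ∃ a b c : RSphere, a ∉ Ω ∧ b ∉ Ω ∧ c ∉ Ω ∧ a ≠ b ∧ a ≠ c ∧ b ≠ c

/-- Multiply connected: the complement has more than one connected component. -/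
def IsMultiplyConnected (Ω : Set RSphere) : Prop :=
  ∃ x ∈ Ωᶜ, ∃ y ∈ Ωᶜ, connectedComponentIn Ωᶜ x ≠ connectedComponentIn Ωᶜ y

/-- Connectivity greater than two: the complement has at least three connected components. -/
def ConnectivityGtTwo (Ω : Set RSphere) : Prop :=
  ∃ x ∈ Ωᶜ, ∃ y ∈ Ωᶜ, ∃ z ∈ Ωᶜ,
    connectedComponentIn Ωᶜ x ≠ connectedComponentIn Ωᶜ y ∧
    connectedComponentIn Ωᶜ x ≠ connectedComponentIn Ωᶜ z ∧
    connectedComponentIn Ωᶜ y ≠ connectedComponentIn Ωᶜ z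

/-- A universal covering `π : 𝔻 → Ω`: a holomorphic surjective covering map of `Ω`
defined on the (simply connected) unit disk. -/
structure IsUniversalCovering (f : ℂ → RSphere) (Ω : Set RSphere) : Prop where
  mapsTo : MapsTo f unitD Ω
  surjOn : SurjOn f unitD Ω
  holo : SphHolomorphicOn f unitD
  covering : IsCoveringMap (fun z : unitD => (⟨f z.1, mapsTo z.2⟩ : Ω))

/-- A deck transformation of the covering `f`: a holomorphic automorphism `γ` of `𝔻`
with `f ∘ γ = f`. -/
structure IsDeckTransformation (f : ℂ → RSphere) (γ : ℂ → ℂ) : Prop where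
  bijOn : BijOn γ unitD unitD
  holo : DifferentiableOn ℂ γ unitD
  deck : ∀ z ∈ unitD, f (γ z) = f z

/-- The Stolz angle `A_{α,ρ}(ζ)` at `ζ ∈ ∂𝔻`. -/
def stolzAngle (ζ : ℂ) (α ρ : ℝ) : Set ℂ :=
  {z | z ∈ unitD ∧ |Complex.arg ζ - Complex.arg (ζ - z)| < α ∧ ‖ζ - z‖ < ρ}

/-- The limit set `Λ` of the deck transformation group of `f`. -/
def limitSet (f : ℂ → RSphere) : Set ℂ :=
  {ζ | ζ ∈ unitC ∧ ∃ γ : ℕ → ℂ → ℂ, (∀ n, IsDeckTransformation f (γ n)) ∧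
    Tendsto (fun n => γ n 0) atTop (𝓝 ζ)}

/-- The non-tangential limit set of a family `S` of disk automorphisms. -/
def ntLimitSetOf (S : Set (ℂ → ℂ)) : Set ℂ :=
  {ζ | ζ ∈ unitC ∧ ∃ γ : ℕ → ℂ → ℂ, (∀ n, γ n ∈ S) ∧
    Tendsto (fun n => γ n 0) atTop (𝓝 ζ) ∧
    ∃ α ρ : ℝ, 0 < α ∧ α < Real.pi / 2 ∧ 0 < ρ ∧ ∀ n, γ n 0 ∈ stolzAngle ζ α ρ}

/-- The non-tangential limit set `Λ_NT` of the deck transformation group of `f`. -/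
def ntLimitSet (f : ℂ → RSphere) : Set ℂ :=
  ntLimitSetOf {γ | IsDeckTransformation f γ}

/-- The radial limit of `f` at `ζ ∈ ∂𝔻` equals `L`. -/
def radialLimitAt (f : ℂ → RSphere) (ζ : ℂ) (L : RSphere) : Prop :=
  Tendsto (fun t : ℝ => f ((t : ℂ) * ζ)) (𝓝[<] (1 : ℝ)) (𝓝 L)

/-- The radial limit of `f` at `ζ` exists. -/
def HasRadialLimit (f : ℂ → RSphere) (ζ : ℂ) : Prop :=
  ∃ L : RSphere, radialLimitAt f ζ L

/-- A curve `η : [0,1) → 𝔻` lands at `ζ`. -/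
def LandsAt (η : ℝ → ℂ) (ζ : ℂ) : Prop :=
  ContinuousOn η (Ico (0:ℝ) 1) ∧ MapsTo η (Ico (0:ℝ) 1) unitD ∧
    Tendsto η (𝓝[<] (1:ℝ)) (𝓝 ζ)

/-- A curve lands non-tangentially at `ζ`: it lands at `ζ` and is eventually contained
in some Stolz angle at `ζ`. -/
def LandsNontangentiallyAt (η : ℝ → ℂ) (ζ : ℂ) : Prop :=
  LandsAt η ζ ∧ ∃ α ρ : ℝ, 0 < α ∧ α < Real.pi / 2 ∧ 0 < ρ ∧
    ∀ᶠ t in 𝓝[<] (1:ℝ), η t ∈ stolzAngle ζ α ρ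

/-- The cluster set of `f` along the curve `η`. -/
def clusterAlong (f : ℂ → RSphere) (η : ℝ → ℂ) : Set RSphere :=
  {w | ∃ t : ℕ → ℝ, (∀ n, t n ∈ Ico (0:ℝ) 1) ∧ Tendsto t atTop (𝓝 1) ∧
    Tendsto (fun n => f (η (t n))) atTop (𝓝 w)}

/-- The radial cluster set of `f` at `ζ`. -/
def radialCluster (f : ℂ → RSphere) (ζ : ℂ) : Set RSphere :=
  clusterAlong f (fun t => (t : ℂ) * ζ)

/-- The angular cluster set of `f` at `ζ`: union of cluster sets along all curves
landing non-tangentially at `ζ`. -/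
def angularCluster (f : ℂ → RSphere) (ζ : ℂ) : Set RSphere :=
  ⋃ η ∈ {η : ℝ → ℂ | LandsNontangentiallyAt η ζ}, clusterAlong f η

/-- `ζ ∈ ∂𝔻` is of escaping type: the image of the radius at `ζ` eventually leaves
every compact subset of `Ω`. -/
def EscapingType (f : ℂ → RSphere) (Ω : Set RSphere) (ζ : ℂ) : Prop :=
  ∀ K : Set RSphere, IsCompact K → K ⊆ Ω → ∀ᶠ (t : ℝ) in 𝓝[<] (1:ℝ), f ((t:ℂ) * ζ) ∉ K

/-- `ζ ∈ ∂𝔻` is of bounded type: the image of the radius is compactly contained in `Ω`. -/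
def BoundedType (f : ℂ → RSphere) (Ω : Set RSphere) (ζ : ℂ) : Prop :=
  ∃ K : Set RSphere, IsCompact K ∧ K ⊆ Ω ∧ ∀ t ∈ Ico (0:ℝ) 1, f ((t:ℂ) * ζ) ∈ K

/-- `ζ ∈ ∂𝔻` is of bungee type: neither escaping nor bounded. -/
def BungeeType (f : ℂ → RSphere) (Ω : Set RSphere) (ζ : ℂ) : Prop :=
  ¬ EscapingType f Ω ζ ∧ ¬ BoundedType f Ω ζ

/-- A boundary component of `Ω`: a connected component of `∂Ω`. -/
def IsBoundaryComponent (Ω B : Set RSphere) : Prop :=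
  ∃ x ∈ frontier Ω, B = connectedComponentIn (frontier Ω) x

/-- An isolated boundary component: it has a neighbourhood disjoint from all other
boundary components. -/
def IsIsolatedBoundaryComponent (Ω B : Set RSphere) : Prop :=
  IsBoundaryComponent Ω B ∧ ∃ U : Set RSphere, IsOpen U ∧ B ⊆ U ∧ U ∩ frontier Ω ⊆ B

/-- The landing set of a curve `η : [0,1) → ℂ̂`. -/
def landingSet (η : ℝ → RSphere) : Set RSphere :=
  {w | ∃ t : ℕ → ℝ, (∀ n, t n ∈ Ico (0:ℝ) 1) ∧ Tendsto t atTop (𝓝 1) ∧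
    Tendsto (fun n => η (t n)) atTop (𝓝 w)}

/-- `p ∈ ∂Ω` is accessible from `Ω`: some curve in `Ω` lands at `p`. -/
def AccessiblePoint (Ω : Set RSphere) (p : RSphere) : Prop :=
  p ∈ frontier Ω ∧ ∃ η : ℝ → RSphere, ContinuousOn η (Ico (0:ℝ) 1) ∧
    MapsTo η (Ico (0:ℝ) 1) Ω ∧ Tendsto η (𝓝[<] (1:ℝ)) (𝓝 p)

/-- `ζ ∈ ∂𝔻` is an ambiguous point for `f`: two curves landing at `ζ` have disjoint
cluster sets. -/
def AmbiguousPoint (f : ℂ → RSphere) (ζ : ℂ) : Prop :=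
  ζ ∈ unitC ∧ ∃ η₁ η₂ : ℝ → ℂ, LandsAt η₁ ζ ∧ LandsAt η₂ ζ ∧
    clusterAlong f η₁ ∩ clusterAlong f η₂ = ∅

/-- A true crosscut of `Ω`: an open Jordan arc in `Ω` with two distinct endpoints on the
same boundary component of `Ω`, splitting `Ω` into exactly two connected components,
exactly one of which is simply connected. -/
def IsTrueCrosscut (Ω C : Set RSphere) : Prop :=
  C ⊆ Ω ∧
  (∃ g : ℝ → RSphere, ContinuousOn g (Icc (0:ℝ) 1) ∧ InjOn g (Icc (0:ℝ) 1) ∧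
     C = g '' Ioo (0:ℝ) 1 ∧ g 0 ∈ frontier Ω ∧
     g 1 ∈ connectedComponentIn (frontier Ω) (g 0) ∧ g 0 ≠ g 1) ∧
  (∃ u ∈ Ω \ C, ∃ v ∈ Ω \ C,
     connectedComponentIn (Ω \ C) u ≠ connectedComponentIn (Ω \ C) v ∧
     (∀ w ∈ Ω \ C, connectedComponentIn (Ω \ C) w = connectedComponentIn (Ω \ C) u ∨
        connectedComponentIn (Ω \ C) w = connectedComponentIn (Ω \ C) v) ∧
     SimplyConnectedSpace ↥(connectedComponentIn (Ω \ C) u) ∧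
     ¬ SimplyConnectedSpace ↥(connectedComponentIn (Ω \ C) v))

/-- `N` is the true crosscut neighbourhood of the true crosscut `C` in `Ω`: the simply
connected component of `Ω ∖ C`. -/
def IsTrueCrosscutNbhd (Ω C N : Set RSphere) : Prop :=
  IsTrueCrosscut Ω C ∧ (∃ u ∈ Ω \ C, N = connectedComponentIn (Ω \ C) u) ∧
    SimplyConnectedSpace ↥N

/-- A Cantor subset of the unit circle: nonempty, compact, perfect and totally
disconnected. -/
def IsCantorSubsetOfCircle (S : Set ℂ) : Prop :=
  S ⊆ unitC ∧ S.Nonempty ∧ IsCompact S ∧ Perfect S ∧ IsTotallyDisconnected S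

/-- `ζ ∈ ∂𝔻` is a parabolic fixed point of the deck transformation group of `f`:
it is the unique fixed point in the closed disk of (the continuous extension of) some
deck transformation, which has no fixed point in `𝔻`. -/
def IsParabolicFixedPoint (f : ℂ → RSphere) (ζ : ℂ) : Prop :=
  ζ ∈ unitC ∧ ∃ γ γe : ℂ → ℂ, IsDeckTransformation f γ ∧
    ContinuousOn γe (Metric.closedBall (0:ℂ) 1) ∧ EqOn γe γ unitD ∧
    MapsTo γe (Metric.closedBall (0:ℂ) 1) (Metric.closedBall (0:ℂ) 1) ∧
    (∀ z ∈ unitD, γe z ≠ z) ∧ γe ζ = ζ ∧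
    (∀ w ∈ Metric.closedBall (0:ℂ) 1, γe w = w → w = ζ)

/-- The subgroup of deck transformations generated by a family `F` (as functions acting
on the disk). -/
inductive DeckGen (f : ℂ → RSphere) (F : Set (ℂ → ℂ)) : (ℂ → ℂ) → Prop where
  | of (γ : ℂ → ℂ) (h : γ ∈ F) : DeckGen f F γ
  | one : DeckGen f F id
  | mul (γ₁ γ₂ : ℂ → ℂ) (h₁ : DeckGen f F γ₁) (h₂ : DeckGen f F γ₂) : DeckGen f F (γ₁ ∘ γ₂)
  | inv (γ δ : ℂ → ℂ) (h : DeckGen f F γ) (hδ : IsDeckTransformation f δ)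
      (hinv : ∀ z ∈ unitD, δ (γ z) = z) : DeckGen f F δ

namespace SPAux

lemma mem_unitD_iff {z : ℂ} : z ∈ unitD ↔ ‖z‖ < 1 := by
  simp [unitD, Complex.dist_eq]

lemma normSq_lt_one_of_mem {z : ℂ} (hz : z ∈ unitD) : normSq z < 1 := by
  rw [mem_unitD_iff] at hz
  have := Complex.sq_norm z
  nlinarith [norm_nonneg z]

lemma mem_of_normSq_lt_one {z : ℂ} (hz : normSq z < 1) : z ∈ unitD := by
  rw [mem_unitD_iff]
  nlinarith [Complex.sq_norm z, norm_nonneg z]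

lemma key_identity (a b : ℂ) :
    normSq (1 - (starRingEnd ℂ) a * b) = normSq (a - b) + (1 - normSq a) * (1 - normSq b) := by
  simp only [normSq_apply, sub_re, sub_im, mul_re, mul_im, one_re, one_im,
    Complex.conj_re, Complex.conj_im]
  ring

def mob (a z : ℂ) : ℂ := (a - z) / (1 - (starRingEnd ℂ) a * z)

lemma denom_ne_zero {a z : ℂ} (ha : a ∈ unitD) (hz : z ∈ unitD) :
    1 - (starRingEnd ℂ) a * z ≠ 0 := by
  intro h
  have h1 : (starRingEnd ℂ) a * z = 1 := by linear_combination -h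
  have : ‖(starRingEnd ℂ) a * z‖ < 1 := by
    rw [norm_mul, Complex.norm_conj]
    rw [mem_unitD_iff] at ha hz
    nlinarith [norm_nonneg a, norm_nonneg z]
  rw [h1] at this; simp at this

lemma mob_mem {a z : ℂ} (ha : a ∈ unitD) (hz : z ∈ unitD) : mob a z ∈ unitD := by
  apply mem_of_normSq_lt_one
  rw [mob, normSq_div]
  rw [div_lt_one (normSq_pos.2 (denom_ne_zero ha hz)), key_identity]
  have h1 := normSq_lt_one_of_mem ha
  have h2 := normSq_lt_one_of_mem hz
  nlinarith

lemma mob_self (a : ℂ) : mob a a = 0 := by simp [mob]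

lemma mob_zero_right {a : ℂ} (ha : a ∈ unitD) : mob a 0 = a := by simp [mob]

lemma mob_mob {a z : ℂ} (ha : a ∈ unitD) (hz : z ∈ unitD) : mob a (mob a z) = z := by
  have h1 : 1 - (starRingEnd ℂ) a * z ≠ 0 := denom_ne_zero ha hz
  have h2 : 1 - (starRingEnd ℂ) a * mob a z ≠ 0 := denom_ne_zero ha (mob_mem ha hz)
  simp only [mob] at h2 ⊢
  rw [div_eq_iff h2]
  have h1' : 1 - z * (starRingEnd ℂ) a ≠ 0 := by rwa [mul_comm]
  field_simp
  ring

lemma mob_differentiableOn {a : ℂ} (ha : a ∈ unitD) : DifferentiableOn ℂ (mob a) unitD := by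
  apply DifferentiableOn.div
  · exact (differentiableOn_const a).sub differentiableOn_id
  · exact (differentiableOn_const _).sub ((differentiableOn_const _).mul differentiableOn_id)
  · exact fun z hz => denom_ne_zero ha hz

lemma schwarz_pick {g : ℂ → ℂ} (hd : DifferentiableOn ℂ g unitD) (hm : MapsTo g unitD unitD)
    {u v : ℂ} (hu : u ∈ unitD) (hv : v ∈ unitD) :
    ‖mob (g u) (g v)‖ ≤ ‖mob u v‖ := by
  have hgu : g u ∈ unitD := hm hu
  set h : ℂ → ℂ := fun z => mob (g u) (g (mob u z)) with hh
  have hmapsmob : MapsTo (mob u) unitD unitD := fun z hz => mob_mem hu hz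
  have hmapsg : MapsTo (fun z => g (mob u z)) unitD unitD := fun z hz => hm (mob_mem hu hz)
  have hd' : DifferentiableOn ℂ h unitD := by
    apply ((mob_differentiableOn hgu).comp (hd.comp (mob_differentiableOn hu) hmapsmob) hmapsg)
  have hm' : MapsTo h unitD unitD := fun z hz => mob_mem hgu (hmapsg hz)
  have h0 : h 0 = 0 := by
    rw [hh]; simp only
    rw [mob_zero_right hu, mob_self]
  have hz : ‖mob u v‖ < 1 := mem_unitD_iff.1 (mob_mem hu hv)
  have := Complex.norm_le_norm_of_mapsTo_ball (R := 1) hd' (hm'.mono_right ball_subset_closedBall) h0 hz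
  have he : h (mob u v) = mob (g u) (g v) := by rw [hh]; simp only [mob_mob hu hv]
  rwa [he] at this


lemma deriv_ne_zero_of_injOn {γ : ℂ → ℂ} (hd : DifferentiableOn ℂ γ unitD)
    (hi : InjOn γ unitD) {z₀ : ℂ} (hz : z₀ ∈ unitD) : deriv γ z₀ ≠ 0 := by
  intro hder
  have hopen : IsOpen unitD := isOpen_ball
  have hnhds : unitD ∈ 𝓝 z₀ := hopen.mem_nhds hz
  have hmemev : ∀ᶠ z in 𝓝 z₀, z ∈ unitD := hnhds
  set g : ℂ → ℂ := fun z => γ z - γ z₀ with hgdef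
  have hAg : AnalyticAt ℂ g z₀ := (hd.analyticAt hnhds).sub analyticAt_const
  have hg0 : g z₀ = 0 := by simp [hgdef]
  -- g is not eventually zero
  have hnot : ¬ (∀ᶠ z in 𝓝 z₀, g z = 0) := by
    intro hev
    obtain ⟨ε, hε, hball⟩ := Metric.eventually_nhds_iff.1 (hev.and hmemev)
    set z₁ := z₀ + (ε/2 : ℝ) with hz₁
    have hz₁mem : dist z₁ z₀ < ε := by
      simp only [hz₁, dist_eq, add_sub_cancel_left]
      rw [Complex.norm_real, Real.norm_eq_abs, abs_of_pos (by linarith)]; linarith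
    obtain ⟨hgz₁, hz₁D⟩ := hball hz₁mem
    have hzz : z₁ = z₀ := hi hz₁D hz (sub_eq_zero.1 hgz₁)
    have : ((ε/2 : ℝ) : ℂ) ≠ 0 := by
      simp only [ne_eq, Complex.ofReal_eq_zero]; linarith
    exact this (by rw [hz₁] at hzz; linear_combination hzz)
  -- the order of g is a finite natural number n ≥ 2
  have horder : analyticOrderAt g z₀ ≠ ⊤ := fun h => hnot (analyticOrderAt_eq_top.1 h)
  set n : ℕ := (analyticOrderAt g z₀).toNat with hn
  have horder' : analyticOrderAt g z₀ = n := (ENat.coe_toNat horder).symm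
  obtain ⟨h, hAh, hc, hfac⟩ := hAg.analyticOrderAt_eq_natCast.1 horder'
  set c := h z₀ with hcdef
  have hn0 : n ≠ 0 := by
    intro h0
    apply hc
    have := hfac.self_of_nhds
    rw [h0, pow_zero, one_smul] at this
    rw [hcdef, ← this, hg0]
  have hderg : deriv g z₀ = 0 := by
    rw [hgdef]
    rw [deriv_sub_const]
    exact hder
  have hn1 : n ≠ 1 := by
    intro h1
    rw [h1] at hfac
    have hd1 : HasDerivAt (fun z => (z - z₀) ^ 1 • h z) (c) z₀ := by
      have := (((hasDerivAt_id z₀).sub_const z₀).pow 1).mul (hAh.differentiableAt.hasDerivAt)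
      simp only [pow_one, sub_self, smul_eq_mul] at this ⊢
      exact this.congr_deriv (by simp [hcdef])
    have : deriv g z₀ = c := by
      rw [Filter.EventuallyEq.deriv_eq hfac]
      exact hd1.deriv
    rw [hderg] at this; exact hc this.symm
  have hn2 : 2 ≤ n := by omega
  have hnC : (n : ℂ) ≠ 0 := by exact_mod_cast hn0
  -- construct an analytic n-th root φ of g near z₀
  set ρ : ℂ → ℂ := fun z => Complex.exp ((Complex.log c + Complex.log (h z / c)) / n) with hρdef
  have hAρ : AnalyticAt ℂ ρ z₀ := by
    apply AnalyticAt.cexp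
    apply AnalyticAt.div _ analyticAt_const hnC
    apply AnalyticAt.add analyticAt_const
    apply AnalyticAt.clog (hAh.div analyticAt_const hc)
    simp only [Pi.div_apply, ← hcdef, div_self hc]
    exact Complex.one_mem_slitPlane
  have hρ0 : ρ z₀ ≠ 0 := Complex.exp_ne_zero _
  have hρn : ∀ᶠ z in 𝓝 z₀, ρ z ^ n = h z := by
    filter_upwards [hAh.continuousAt.eventually_ne hc] with z hzne
    rw [hρdef]
    simp only
    rw [← Complex.exp_nat_mul]
    rw [mul_div_cancel₀ _ hnC, Complex.exp_add, Complex.exp_log hc,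
      Complex.exp_log (div_ne_zero hzne hc)]
    field_simp
  set φ : ℂ → ℂ := fun z => (z - z₀) * ρ z with hφdef
  have hAφ : AnalyticAt ℂ φ z₀ := ((analyticAt_id.sub analyticAt_const)).mul hAρ
  have hφ0 : φ z₀ = 0 := by simp [hφdef]
  have hdφ : HasDerivAt φ (ρ z₀) z₀ := by
    have := ((hasDerivAt_id z₀).sub_const z₀).mul (hAρ.differentiableAt.hasDerivAt)
    exact this.congr_deriv (by simp)
  have hsd : HasStrictDerivAt φ (ρ z₀) z₀ := by
    obtain ⟨p, hp⟩ := hAφ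
    have h1 := hp.hasStrictDerivAt
    have h2 := hp.hasDerivAt
    rwa [h2.unique hdφ] at h1
  have hmap : map φ (𝓝 z₀) = 𝓝 0 := by
    have := hsd.map_nhds_eq hρ0
    rwa [hφ0] at this
  -- pick two distinct preimages of two n-th roots of the same point
  have hE : ∀ᶠ z in 𝓝 z₀, (g z = (z - z₀) ^ n • h z ∧ ρ z ^ n = h z) ∧ z ∈ unitD :=
    (hfac.and hρn).and hmemev
  have hEmem : φ '' {z | (g z = (z - z₀) ^ n • h z ∧ ρ z ^ n = h z) ∧ z ∈ unitD} ∈ 𝓝 (0 : ℂ) := by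
    rw [← hmap]
    exact image_mem_map hE
  obtain ⟨ε, hε, hball⟩ := Metric.mem_nhds_iff.1 hEmem
  set ξ₁ : ℂ := ((ε/2 : ℝ) : ℂ) with hξ₁
  set ξ₂ : ℂ := ξ₁ * Complex.exp (2 * Real.pi * Complex.I / n) with hξ₂
  have habs1 : ‖ξ₁‖ = ε / 2 := by
    rw [hξ₁, Complex.norm_real, Real.norm_eq_abs, abs_of_pos (by linarith)]
  have habsexp : ‖Complex.exp (2 * Real.pi * Complex.I / n)‖ = 1 := by
    rw [Complex.norm_exp]
    have : (2 * Real.pi * Complex.I / n).re = 0 := by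
      simp [Complex.div_re]
    rw [this, Real.exp_zero]
  have hmem1 : ξ₁ ∈ Metric.ball (0:ℂ) ε := by
    rw [mem_ball_zero_iff, habs1]; linarith
  have hmem2 : ξ₂ ∈ Metric.ball (0:ℂ) ε := by
    rw [mem_ball_zero_iff, hξ₂, norm_mul, habs1, habsexp, mul_one]
    linarith
  have hξ₁0 : ξ₁ ≠ 0 := by
    rw [hξ₁]; simp only [ne_eq, Complex.ofReal_eq_zero]; linarith
  have hneq : ξ₁ ≠ ξ₂ := by
    intro heq
    rw [hξ₂] at heq
    have hexp1 : Complex.exp (2 * Real.pi * Complex.I / n) = 1 := by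
      have h' : ξ₁ * Complex.exp (2 * Real.pi * Complex.I / n) = ξ₁ * 1 := by
        rw [mul_one, ← heq]
      exact mul_left_cancel₀ hξ₁0 h'
    obtain ⟨k, hk⟩ := Complex.exp_eq_one_iff.1 hexp1
    have h2pi : (2 * (Real.pi : ℂ) * Complex.I) ≠ 0 := by
      simp [Real.pi_ne_zero, Complex.I_ne_zero]
    have hk' : 2 * (Real.pi : ℂ) * Complex.I = k * (2 * Real.pi * Complex.I) * n := by
      field_simp at hk
      linear_combination (2 * (Real.pi : ℂ) * Complex.I) * hk
    have h3 : ((k : ℂ) * n - 1) * (2 * (Real.pi : ℂ) * Complex.I) = 0 := by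
      linear_combination -hk'
    have h4 : (k : ℂ) * n = 1 := by
      rcases mul_eq_zero.1 h3 with h' | h'
      · linear_combination h'
      · exact absurd h' h2pi
    have hint : (k : ℤ) * n = 1 := by exact_mod_cast h4
    have hdvd : (n : ℤ) ∣ 1 := ⟨k, by linear_combination -hint⟩
    have hdvd' : n ∣ 1 := by exact_mod_cast hdvd
    have := Nat.dvd_one.mp hdvd'
    omega
  have hpow : ξ₂ ^ n = ξ₁ ^ n := by
    rw [hξ₂, mul_pow, ← Complex.exp_nat_mul, mul_div_cancel₀ _ hnC, Complex.exp_two_pi_mul_I,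
      mul_one]
  obtain ⟨z₁, hz₁E, hφ₁⟩ := hball hmem1
  obtain ⟨z₂, hz₂E, hφ₂⟩ := hball hmem2
  have hgval : ∀ z, (g z = (z - z₀) ^ n • h z ∧ ρ z ^ n = h z ) → g z = φ z ^ n := by
    rintro z ⟨h1, h2⟩
    rw [h1, ← h2, smul_eq_mul, hφdef]
    simp only
    rw [mul_pow]
  have hg12 : g z₁ = g z₂ := by
    rw [hgval z₁ hz₁E.1, hgval z₂ hz₂E.1, hφ₁, hφ₂, hpow]
  have hγ12 : γ z₁ = γ z₂ := by
    have : γ z₁ - γ z₀ = γ z₂ - γ z₀ := hg12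
    linear_combination this
  have : z₁ = z₂ := hi hz₁E.2 hz₂E.2 hγ12
  rw [this, hφ₂] at hφ₁
  exact hneq hφ₁.symm

lemma exists_inverse {γ : ℂ → ℂ} (hb : BijOn γ unitD unitD) (hd : DifferentiableOn ℂ γ unitD) :
    ∃ δ : ℂ → ℂ, DifferentiableOn ℂ δ unitD ∧ MapsTo δ unitD unitD ∧
      (∀ z ∈ unitD, δ (γ z) = z) ∧ (∀ w ∈ unitD, γ (δ w) = w) := by
  set δ := Function.invFunOn γ unitD with hδ
  have hleft : ∀ z ∈ unitD, δ (γ z) = z := fun z hz => hb.injOn.leftInvOn_invFunOn hz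
  have hright : ∀ w ∈ unitD, γ (δ w) = w := fun w hw => hb.surjOn.rightInvOn_invFunOn hw
  have hmaps : MapsTo δ unitD unitD := hb.surjOn.mapsTo_invFunOn
  refine ⟨δ, ?_, hmaps, hleft, hright⟩
  intro w hw
  obtain ⟨z, hzD, hzw⟩ := hb.surjOn hw
  have hA : AnalyticAt ℂ γ z := hd.analyticAt (isOpen_ball.mem_nhds hzD)
  have hne : deriv γ z ≠ 0 := deriv_ne_zero_of_injOn hd hb.injOn hzD
  have hsd : HasStrictDerivAt γ (deriv γ z) z := by
    obtain ⟨p, hp⟩ := hA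
    rw [hp.deriv]
    exact hp.hasStrictDerivAt
  have hloc : ∀ᶠ x in 𝓝 z, δ (γ x) = x := by
    filter_upwards [isOpen_ball.mem_nhds hzD] with x hx using hleft x hx
  have hinv := hsd.to_local_left_inverse hne hloc
  rw [hzw] at hinv
  exact (HasStrictDerivAt.hasDerivAt hinv).differentiableAt.differentiableWithinAt

lemma stolz_estimate {ζ z : ℂ} {α : ℝ} (hζ : ‖ζ‖ = 1) (hz : z ∈ unitD)
    (hα0 : 0 < α) (hα : α < Real.pi/2)
    (harg : |Complex.arg ζ - Complex.arg (ζ - z)| < α)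
    (hsmall : ‖ζ - z‖ ≤ Real.cos α) :
    ‖mob ((‖z‖ : ℂ) * ζ) z‖ ≤ Real.sqrt (4 / (4 + Real.cos α ^ 2)) := by
  have hπ := Real.pi_pos
  have hcos : 0 < Real.cos α := Real.cos_pos_of_mem_Ioo ⟨by linarith, hα⟩
  set v : ℂ := ζ - z with hvdef
  set r : ℝ := ‖z‖ with hrdef
  have hr1 : r < 1 := mem_unitD_iff.1 hz
  have hr0 : 0 ≤ r := norm_nonneg z
  have hv0 : v ≠ 0 := by
    intro h0
    have hζz : ζ = z := by rw [hvdef] at h0; linear_combination h0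
    have : r = 1 := by rw [hrdef, ← hζz, hζ]
    linarith
  have habsv : 0 < ‖v‖ := norm_pos_iff.mpr hv0
  set b : ℂ := (r : ℂ) * ζ with hbdef
  have habsb : ‖b‖ = r := by
    rw [hbdef, norm_mul, Complex.norm_real, Real.norm_eq_abs, hζ, mul_one, _root_.abs_of_nonneg hr0]
  -- real part estimate
  have hre : ‖v‖ * Real.cos α ≤ ((starRingEnd ℂ) ζ * v).re := by
    have hζ0 : ζ ≠ 0 := by intro h; rw [h] at hζ; simp at hζ
    have hw0 : (starRingEnd ℂ) ζ * v ≠ 0 :=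
      mul_ne_zero (by simpa using hζ0) hv0
    have habsw : ‖(starRingEnd ℂ) ζ * v‖ = ‖v‖ := by
      rw [norm_mul, Complex.norm_conj, hζ, one_mul]
    have hangle : (Complex.arg ((starRingEnd ℂ) ζ * v) : Real.Angle)
        = ((Complex.arg v - Complex.arg ζ : ℝ) : Real.Angle) := by
      rw [Complex.arg_mul_coe_angle (by simpa using hζ0) hv0, Complex.arg_conj_coe_angle]
      rw [sub_eq_neg_add, Real.Angle.coe_add, Real.Angle.coe_neg]
    have hcoseq : Real.cos (Complex.arg ((starRingEnd ℂ) ζ * v))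
        = Real.cos (Complex.arg v - Complex.arg ζ) := by
      have := congrArg Real.Angle.cos hangle
      rwa [Real.Angle.cos_coe, Real.Angle.cos_coe] at this
    have hcosge : Real.cos α ≤ Real.cos (Complex.arg v - Complex.arg ζ) := by
      have h1 : |Complex.arg v - Complex.arg ζ| ≤ α := by
        rw [abs_sub_comm]
        exact le_of_lt harg
      calc Real.cos α ≤ Real.cos |Complex.arg v - Complex.arg ζ| :=
            Real.cos_le_cos_of_nonneg_of_le_pi (abs_nonneg _) (by linarith) h1
        _ = Real.cos (Complex.arg v - Complex.arg ζ) := Real.cos_abs _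
    have hcosarg := Complex.cos_arg hw0
    rw [hcoseq] at hcosarg
    have hre' : ((starRingEnd ℂ) ζ * v).re
        = ‖v‖ * Real.cos (Complex.arg v - Complex.arg ζ) := by
      rw [hcosarg, habsw]
      field_simp
    rw [hre']
    have := mul_le_mul_of_nonneg_left hcosge (le_of_lt habsv)
    linarith
  -- 1 - r^2 lower bound
  have h1r2 : ‖v‖ * Real.cos α ≤ 1 - r^2 := by
    have hns : r^2 = 1 + (‖v‖)^2 - 2 * ((starRingEnd ℂ) ζ * v).re := by
      have h1 : z = ζ - v := by rw [hvdef]; ring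
      have h2 : Complex.normSq z = Complex.normSq ζ + Complex.normSq v
          - 2 * (ζ * (starRingEnd ℂ) v).re := by rw [h1]; exact Complex.normSq_sub ζ v
      have h3 : (ζ * (starRingEnd ℂ) v).re = ((starRingEnd ℂ) ζ * v).re := by
        have : (starRingEnd ℂ) ((starRingEnd ℂ) ζ * v) = ζ * (starRingEnd ℂ) v := by
          rw [map_mul]; simp [mul_comm]
        rw [← this, Complex.conj_re]
      have h4 : Complex.normSq ζ = 1 := by
        have := Complex.sq_norm ζ; rw [hζ] at this; simpa using this.symm
      rw [hrdef, Complex.sq_norm, h2, h4, h3, Complex.sq_norm]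
    nlinarith [habsv, hsmall, hre]
  -- numerator bound
  have h1rv : 1 - r ≤ ‖v‖ := by
    have h := norm_sub_norm_le ζ z
    simp only [hζ, ← hvdef, ← hrdef] at h
    linarith
  have hnum : ‖b - z‖ ≤ 2 * ‖v‖ := by
    have h1 : b - z = (b - ζ) + v := by rw [hvdef]; ring
    have h2 : ‖b - ζ‖ = 1 - r := by
      have : b - ζ = ((r - 1 : ℝ) : ℂ) * ζ := by rw [hbdef]; push_cast; ring
      rw [this, norm_mul, Complex.norm_real, Real.norm_eq_abs, hζ, mul_one, abs_of_nonpos (by linarith)]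
      ring
    calc ‖b - z‖ ≤ ‖b - ζ‖ + ‖v‖ := by
          rw [h1]; exact norm_add_le _ _
      _ = (1 - r) + ‖v‖ := by rw [h2]
      _ ≤ 2 * ‖v‖ := by linarith
  -- put it together
  have hb_mem : b ∈ unitD := by rw [mem_unitD_iff, habsb]; exact hr1
  have hnsb : Complex.normSq b = r^2 := by rw [← Complex.sq_norm, habsb]
  have hnsz : Complex.normSq z = r^2 := by rw [← Complex.sq_norm, ← hrdef]
  have hdenom : Complex.normSq (1 - (starRingEnd ℂ) b * z)
      = Complex.normSq (b - z) + (1 - r^2)^2 := by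
    rw [key_identity, hnsb, hnsz]; ring
  have hD4 : Complex.normSq (b - z) ≤ 4 * (‖v‖)^2 := by
    have := Complex.sq_norm (b - z)
    nlinarith [norm_nonneg (b - z)]
  have hP : (‖v‖)^2 * (Real.cos α)^2 ≤ (1 - r^2)^2 := by
    have h0 : 0 ≤ ‖v‖ * Real.cos α := mul_nonneg habsv.le hcos.le
    nlinarith [h1r2, h0]
  have hpos : 0 < 1 - r^2 := by nlinarith
  have hfrac : Complex.normSq (mob b z) ≤ 4 / (4 + Real.cos α ^ 2) := by
    rw [mob, normSq_div, hdenom]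
    rw [div_le_div_iff₀ (by nlinarith [Complex.normSq_nonneg (b - z), pow_pos hpos 2])
      (by nlinarith [hcos])]
    linarith [mul_le_mul_of_nonneg_right hD4 (sq_nonneg (Real.cos α)), hP]
  have habsmob : ‖mob b z‖ = Real.sqrt (Complex.normSq (mob b z)) :=
    Complex.norm_def _
  rw [habsmob]
  exact Real.sqrt_le_sqrt hfrac


lemma sph_continuousAt {f : ℂ → RSphere} {z : ℂ} (h : SphHolomorphicAt f z) :
    ContinuousAt f z := by
  rcases h with ⟨g, hg, hev⟩ | ⟨g, hg, hg0, hev⟩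
  · have hc : ContinuousAt (fun w => ((g w : ℂ) : RSphere)) z :=
      (OnePoint.continuous_coe.continuousAt).comp hg.continuousAt
    exact hc.congr (Filter.EventuallyEq.symm hev)
  · rcases hg.eventually_eq_zero_or_eventually_ne_zero with hzero | hne
    · have hevf : ∀ᶠ w in 𝓝 z, f w = (∞ : RSphere) := by
        filter_upwards [hev, hzero] with w h1 h2 using h1.1 h2
      exact continuousAt_const.congr (Filter.EventuallyEq.symm (f := fun w => f w) (g := fun _ => (∞ : RSphere)) hevf)
    · have hfz : f z = ∞ := (hev.self_of_nhds).1 hg0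
      rw [ContinuousAt, hfz, ← nhdsNE_sup_pure z, tendsto_sup]
      constructor
      · have hne' : ∀ᶠ w in 𝓝[≠] z, f w = (((g w)⁻¹ : ℂ) : RSphere) := by
          filter_upwards [hne, eventually_nhdsWithin_of_eventually_nhds hev] with w h1 h2
            using h2.2 h1
        refine Tendsto.congr' (Filter.EventuallyEq.symm (f := fun w => f w) (g := fun w => (((g w)⁻¹ : ℂ) : RSphere)) hne') ?_
        have hgz : Tendsto g (𝓝[≠] z) (𝓝 0) := by
          have : Tendsto g (𝓝 z) (𝓝 0) := hg0 ▸ hg.continuousAt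
          exact this.mono_left nhdsWithin_le_nhds
        have hcob : Tendsto (fun w => (g w)⁻¹) (𝓝[≠] z) (Bornology.cobounded ℂ) := by
          rw [← tendsto_norm_atTop_iff_cobounded]
          have hg0' : Tendsto (fun w => ‖g w‖) (𝓝[≠] z) (𝓝[>] (0:ℝ)) := by
            apply tendsto_nhdsWithin_of_tendsto_nhds_of_eventually_within
            · simpa using hgz.norm
            · filter_upwards [hne] with w hw using norm_pos_iff.2 hw
          have := tendsto_inv_nhdsGT_zero.comp hg0'
          refine this.congr fun w => ?_
          simp [norm_inv]
        have hcoc : Tendsto (fun w => (g w)⁻¹) (𝓝[≠] z) (Filter.coclosedCompact ℂ) := by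
          rwa [Filter.coclosedCompact_eq_cocompact, ← Metric.cobounded_eq_cocompact]
        exact OnePoint.tendsto_coe_infty.comp hcoc
      · rw [tendsto_pure_left]
        intro s hs
        rw [hfz]
        exact mem_of_mem_nhds hs


end SPAux

/-- If the radial limit of `π` exists at `ζ ∈ ∂𝔻`, then `ζ ∉ Λ_NT`. -/
theorem not_mem_ntLimitSet_of_hasRadialLimit (Ω : Set RSphere) (f : ℂ → RSphere)
    (hdom : IsSphDomain Ω) (hconn : ConnectivityGtTwo Ω)
    (hcov : IsUniversalCovering f Ω)
    (ζ : ℂ) (hζ : ζ ∈ unitC) (h : HasRadialLimit f ζ) :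
    ζ ∉ ntLimitSet f := by
  intro hmem
  obtain ⟨hζC, γs, hdeck, htend, α, ρ, hα0, hαlt, hρpos, hstolz⟩ := hmem
  obtain ⟨L, hL⟩ := h
  have hπ := Real.pi_pos
  have hcos : 0 < Real.cos α := Real.cos_pos_of_mem_Ioo ⟨by linarith, hαlt⟩
  have hζabs : ‖ζ‖ = 1 := by
    have h1 : dist ζ 0 = 1 := hζ
    rwa [Complex.dist_eq, sub_zero] at h1
  have hzD : ∀ n, γs n 0 ∈ unitD := fun n => (hstolz n).1
  have hr1 : ∀ n, ‖γs n 0‖ < 1 := fun n => SPAux.mem_unitD_iff.1 (hzD n)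
  have hr0 : ∀ n, (0:ℝ) ≤ ‖γs n 0‖ := fun n => norm_nonneg _
  set b : ℕ → ℂ := fun n => ((‖γs n 0‖ : ℝ) : ℂ) * ζ with hbdef
  have hbD : ∀ n, b n ∈ unitD := by
    intro n
    rw [SPAux.mem_unitD_iff, hbdef]
    simp only
    rw [norm_mul, Complex.norm_real, Real.norm_eq_abs, hζabs, mul_one, _root_.abs_of_nonneg (hr0 n)]
    exact hr1 n
  set k : ℝ := Real.sqrt (4 / (4 + Real.cos α ^ 2)) with hkdef
  have hk0 : 0 ≤ k := Real.sqrt_nonneg _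
  have hk1 : k < 1 := by
    rw [hkdef, show (1:ℝ) = Real.sqrt 1 by rw [Real.sqrt_one]]
    apply Real.sqrt_lt_sqrt (by positivity)
    rw [div_lt_one (by positivity)]
    nlinarith [hcos]
  have hzt : Tendsto (fun n => γs n 0) atTop (𝓝 ζ) := htend
  have hsmall : ∀ᶠ n in atTop, ‖ζ - γs n 0‖ ≤ Real.cos α := by
    have h1 : Tendsto (fun n => ζ - γs n 0) atTop (𝓝 0) := by
      have := (tendsto_const_nhds (x := ζ) (f := atTop)).sub hzt
      simpa using this
    have h2 : Tendsto (fun n => ‖ζ - γs n 0‖) atTop (𝓝 0) := by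
      simpa [Function.comp_def] using (continuous_norm.tendsto 0).comp h1
    filter_upwards [h2 (Iio_mem_nhds hcos)] with n hn using le_of_lt hn
  have hwbound : ∀ᶠ n in atTop, f (b n) ∈ f '' (Metric.closedBall (0:ℂ) k) := by
    filter_upwards [hsmall] with n hn
    obtain ⟨δ, hδd, hδm, hδl, hδr⟩ := SPAux.exists_inverse (hdeck n).bijOn (hdeck n).holo
    have h0D : (0:ℂ) ∈ unitD := by rw [SPAux.mem_unitD_iff]; simp
    have hsp := SPAux.schwarz_pick hδd hδm (hbD n) (hzD n)
    have hδz : δ (γs n 0) = 0 := hδl 0 h0D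
    rw [hδz, SPAux.mob_zero_right (hδm (hbD n))] at hsp
    have hst := SPAux.stolz_estimate hζabs (hzD n) hα0 hαlt (hstolz n).2.1 hn
    have hδb : ‖δ (b n)‖ ≤ k := le_trans hsp hst
    refine ⟨δ (b n), ?_, ?_⟩
    · rw [mem_closedBall_zero_iff]
      exact hδb
    · have hd := (hdeck n).deck (δ (b n)) (hδm (hbD n))
      rw [hδr (b n) (hbD n)] at hd
      exact hd.symm
  have hsubD : Metric.closedBall (0:ℂ) k ⊆ unitD := by
    intro x hx
    rw [SPAux.mem_unitD_iff]
    have := mem_closedBall_zero_iff.1 hx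
    linarith
  have hcontf : ContinuousOn f (Metric.closedBall (0:ℂ) k) := fun x hx =>
    (SPAux.sph_continuousAt (hcov.holo x (hsubD hx))).continuousWithinAt
  have hKcomp : IsCompact (f '' Metric.closedBall (0:ℂ) k) :=
    (isCompact_closedBall _ _).image_of_continuousOn hcontf
  have hKΩ : f '' Metric.closedBall (0:ℂ) k ⊆ Ω := by
    rintro _ ⟨x, hx, rfl⟩
    exact hcov.mapsTo (hsubD hx)
  have hrt : Tendsto (fun n => ‖γs n 0‖) atTop (𝓝 1) := by
    have := (continuous_norm.tendsto ζ).comp hzt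
    rwa [hζabs] at this
  have hrt' : Tendsto (fun n => ‖γs n 0‖) atTop (𝓝[<] (1:ℝ)) :=
    tendsto_nhdsWithin_of_tendsto_nhds_of_eventually_within _ hrt
      (Eventually.of_forall fun n => hr1 n)
  have hfbL : Tendsto (fun n => f (b n)) atTop (𝓝 L) := hL.comp hrt'
  have hLK : L ∈ f '' Metric.closedBall (0:ℂ) k :=
    hKcomp.isClosed.mem_of_tendsto hfbL hwbound
  have hLΩ : L ∈ Ω := hKΩ hLK
  -- covering argument
  classical
  set p : ↥unitD → ↥Ω := fun z => ⟨f z.1, hcov.mapsTo z.2⟩ with hpdef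
  have hcovp : IsCoveringMap p := hcov.covering
  set x₀ : ↥Ω := ⟨L, hLΩ⟩ with hx₀def
  have hev := hcovp x₀
  haveI hdisc := hev.1
  haveI : Nonempty (p ⁻¹' {x₀}) := by
    obtain ⟨z, hzD, hz⟩ := hcov.surjOn hLΩ
    exact ⟨⟨⟨z, hzD⟩, Subtype.ext hz⟩⟩
  set T := hev.toTrivialization with hTdef
  have hTmem : x₀ ∈ T.baseSet := hev.mem_toTrivialization_baseSet
  set u : ℝ → ℝ := fun t => if 0 ≤ t ∧ t < 1 then t else 0 with hudef
  have huI : ∀ t, 0 ≤ u t ∧ u t < 1 := by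
    intro t
    rw [hudef]; simp only
    split_ifs with h'
    · exact h'
    · exact ⟨le_refl 0, one_pos⟩
  have hqD : ∀ t : ℝ, ((u t : ℝ) : ℂ) * ζ ∈ unitD := by
    intro t
    rw [SPAux.mem_unitD_iff, norm_mul, Complex.norm_real, Real.norm_eq_abs, hζabs, mul_one,
      _root_.abs_of_nonneg (huI t).1]
    exact (huI t).2
  set q : ℝ → ↥unitD := fun t => ⟨((u t : ℝ) : ℂ) * ζ, hqD t⟩ with hqdef
  have hequt : ∀ᶠ t in 𝓝[<] (1:ℝ), u t = t := by
    have h1 : ∀ᶠ t in 𝓝[<] (1:ℝ), (0:ℝ) < t :=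
      eventually_nhdsWithin_of_eventually_nhds (eventually_gt_nhds zero_lt_one)
    have h2 : ∀ᶠ t in 𝓝[<] (1:ℝ), t < 1 := eventually_mem_nhdsWithin
    filter_upwards [h1, h2] with t ht1 ht2
    rw [hudef]; simp only
    rw [if_pos ⟨ht1.le, ht2⟩]
  have hfq : Tendsto (fun t => f (((u t : ℝ) : ℂ) * ζ)) (𝓝[<] (1:ℝ)) (𝓝 L) := by
    refine Tendsto.congr' ?_ hL
    filter_upwards [hequt] with t ht
    rw [ht]
  have hpq : Tendsto (fun t => p (q t)) (𝓝[<] (1:ℝ)) (𝓝 x₀) := by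
    rw [tendsto_subtype_rng]
    exact hfq
  have hbase : ∀ᶠ t in 𝓝[<] (1:ℝ), p (q t) ∈ T.baseSet :=
    hpq (T.open_baseSet.mem_nhds hTmem)
  obtain ⟨a, ha1, hsub'⟩ := mem_nhdsLT_iff_exists_Ioo_subset.1 hbase
  set a' : ℝ := max a 0 with ha'def
  have ha'1 : a' < 1 := max_lt (mem_Iio.1 ha1) one_pos
  set S : Set ℝ := Ioo a' 1 with hSdef
  have hSS : S ⊆ Ioo a 1 := fun t ht => ⟨(le_max_left a 0).trans_lt ht.1, ht.2⟩
  have hSbase : ∀ t ∈ S, p (q t) ∈ T.baseSet := fun t ht => hsub' (hSS ht)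
  have hSsource : ∀ t ∈ S, q t ∈ T.source := fun t ht => T.mem_source.2 (hSbase t ht)
  have hSu : ∀ t ∈ S, u t = t := by
    intro t ht
    rw [hudef]; simp only
    exact if_pos ⟨((le_max_right a 0).trans_lt ht.1).le, ht.2⟩
  have hqcont : ContinuousOn q S := by
    rw [Topology.IsInducing.subtypeVal.continuousOn_iff]
    have hc : ContinuousOn (fun t : ℝ => ((t : ℝ) : ℂ) * ζ) S :=
      (Complex.continuous_ofReal.mul continuous_const).continuousOn
    apply hc.congr
    intro t ht
    show ((u t : ℝ) : ℂ) * ζ = ((t : ℝ) : ℂ) * ζ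
    rw [hSu t ht]
  have hσcont : ContinuousOn (fun t => (T (q t)).2) S := by
    have h1 : ContinuousOn (fun t => T (q t)) S := by
      exact ContinuousOn.comp (g := fun e => T e) (t := T.source)
        T.toOpenPartialHomeomorph.continuousOn hqcont (fun t ht => hSsource t ht)
    exact continuous_snd.comp_continuousOn h1
  have hSne : ((a' + 1)/2) ∈ S := ⟨by linarith, by linarith⟩
  set i := (T (q ((a'+1)/2))).2 with hidef
  have hconsti : ∀ t ∈ S, (T (q t)).2 = i := by
    intro t ht
    have hpre : IsPreconnected S := isPreconnected_Ioo
    have himage : ((fun t => (T (q t)).2) '' S).Subsingleton :=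
      (hpre.image _ hσcont).subsingleton
    exact himage ⟨t, ht, rfl⟩ ⟨_, hSne, rfl⟩
  have hrecon : ∀ t ∈ S, q t = T.toOpenPartialHomeomorph.symm (p (q t), i) := by
    intro t ht
    have h1 : T (q t) = (p (q t), i) :=
      Prod.ext (T.coe_fst (hSsource t ht)) (hconsti t ht)
    rw [← h1]
    exact (T.toOpenPartialHomeomorph.left_inv (hSsource t ht)).symm
  have hx₀target : (x₀, i) ∈ T.target := by
    rw [T.target_eq]
    exact ⟨hTmem, mem_univ _⟩
  have hsymCont : ContinuousAt (T.toOpenPartialHomeomorph.symm) (x₀, i) :=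
    T.toOpenPartialHomeomorph.symm.continuousAt
      (by rw [OpenPartialHomeomorph.symm_source]; exact hx₀target)
  have hpair : Tendsto (fun t => (p (q t), i)) (𝓝[<] (1:ℝ)) (𝓝 (x₀, i)) :=
    hpq.prodMk_nhds tendsto_const_nhds
  have hqlim : Tendsto q (𝓝[<] (1:ℝ)) (𝓝 (T.toOpenPartialHomeomorph.symm (x₀, i))) := by
    have hSev : ∀ᶠ t in 𝓝[<] (1:ℝ), t ∈ S :=
      mem_nhdsLT_iff_exists_Ioo_subset.2 ⟨a', mem_Iio.2 ha'1, subset_rfl⟩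
    refine Tendsto.congr' ?_ (hsymCont.tendsto.comp hpair)
    filter_upwards [hSev] with t ht
    exact (hrecon t ht).symm
  have hvq : Tendsto (fun t => ((q t : ↥unitD) : ℂ)) (𝓝[<] (1:ℝ))
      (𝓝 ((T.toOpenPartialHomeomorph.symm (x₀, i) : ↥unitD) : ℂ)) :=
    (continuous_subtype_val.tendsto _).comp hqlim
  have hvq2 : Tendsto (fun t : ℝ => ((t : ℝ) : ℂ) * ζ) (𝓝[<] (1:ℝ))
      (𝓝 ((T.toOpenPartialHomeomorph.symm (x₀, i) : ↥unitD) : ℂ)) := by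
    refine Tendsto.congr' ?_ hvq
    filter_upwards [hequt] with t ht
    show ((u t : ℝ) : ℂ) * ζ = ((t : ℝ) : ℂ) * ζ
    rw [ht]
  have hvζ : Tendsto (fun t : ℝ => ((t : ℝ) : ℂ) * ζ) (𝓝[<] (1:ℝ)) (𝓝 ζ) := by
    have hc : Continuous (fun t : ℝ => ((t : ℝ) : ℂ) * ζ) :=
      Complex.continuous_ofReal.mul continuous_const
    have := (hc.tendsto 1).mono_left (nhdsWithin_le_nhds (s := Iio (1:ℝ)))
    simpa using this
  have hζeq : ζ = ((T.toOpenPartialHomeomorph.symm (x₀, i) : ↥unitD) : ℂ) :=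
    tendsto_nhds_unique hvζ hvq2
  have hmemD : ((T.toOpenPartialHomeomorph.symm (x₀, i) : ↥unitD) : ℂ) ∈ unitD :=
    (T.toOpenPartialHomeomorph.symm (x₀, i) : ↥unitD).2
  rw [← hζeq] at hmemD
  have hlt : ‖ζ‖ < 1 := SPAux.mem_unitD_iff.1 hmemD
  rw [hζabs] at hlt
  exact lt_irrefl 1 hlt
end
end

section
/- Let Ω ⊂ ℂ̂ be a hyperbolic multiply connected domain, and let π : 𝔻 → Ω be a universal covering with deck transformation group Γ. If e^{iθ} ∈ Λ_NT and η ⊂ 𝔻 is a curve landing non-tangentially at e^{iθ}, then Cl_η(π, e^{iθ}) ∩ Ω ≠ ∅; in particular, Cl_A(π, e^{iθ}) ∩ Ω ≠ ∅. -/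
open Complex Metric Set Filter Topology OnePoint MeasureTheory

noncomputable section

/-! ### Auxiliary lemmas -/

set_option maxHeartbeats 1000000

instance : FirstCountableTopology RSphere := by
  constructor
  intro x
  cases x with
  | none =>
    show (𝓝 (∞ : OnePoint ℂ)).IsCountablyGenerated
    rw [OnePoint.nhds_infty_eq, Filter.coclosedCompact_eq_cocompact,
      ← Metric.cobounded_eq_cocompact, ← comap_norm_atTop]
    infer_instance
  | some x =>
    show (𝓝 ((x : ℂ) : OnePoint ℂ)).IsCountablyGenerated
    rw [OnePoint.nhds_coe_eq]
    infer_instance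

lemma unitD_isOpen : IsOpen unitD := Metric.isOpen_ball

lemma mem_unitD_iff {z : ℂ} : z ∈ unitD ↔ ‖z‖ < 1 := by
  simp [unitD, Metric.mem_ball, Complex.dist_eq]

lemma zero_mem_unitD : (0 : ℂ) ∈ unitD := by rw [mem_unitD_iff]; simp

lemma nhds_le_map_nhds_of_inj {γ : ℂ → ℂ} (hd : DifferentiableOn ℂ γ unitD)
    (hinj : Set.InjOn γ unitD) {z : ℂ} (hz : z ∈ unitD) : 𝓝 (γ z) ≤ Filter.map γ (𝓝 z) := by
  have hA : AnalyticOnNhd ℂ γ unitD := hd.analyticOnNhd unitD_isOpen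
  rcases (hA z hz).eventually_constant_or_nhds_le_map_nhds with hconst | h
  · exfalso
    have h2 : ∀ᶠ w in 𝓝 z, γ w = γ z ∧ w ∈ unitD :=
      hconst.and (unitD_isOpen.eventually_mem hz)
    rcases Metric.eventually_nhds_iff.1 h2 with ⟨ε, hε, hball⟩
    have hne : z + (ε/2 : ℝ) ≠ z := by
      simp only [ne_eq, add_eq_left, Complex.ofReal_eq_zero]
      positivity
    have hmem : dist (z + (ε/2 : ℝ)) z < ε := by
      rw [dist_eq_norm]
      simp only [add_sub_cancel_left, Complex.norm_real, Real.norm_eq_abs]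
      rw [abs_of_pos (by positivity)]
      linarith
    obtain ⟨hval, hmem'⟩ := hball hmem
    exact hne (hinj hmem' hz hval)
  · exact h

lemma continuousAt_inv_of_inj {γ δ : ℂ → ℂ} (hd : DifferentiableOn ℂ γ unitD)
    (hinj : Set.InjOn γ unitD) (hδmaps : Set.MapsTo δ unitD unitD)
    (hlr : ∀ z ∈ unitD, δ (γ z) = z) (hrl : ∀ w ∈ unitD, γ (δ w) = w)
    {w : ℂ} (hw : w ∈ unitD) : ContinuousAt δ w := by
  have hz : δ w ∈ unitD := hδmaps hw
  have hγz : γ (δ w) = w := hrl w hw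
  rw [ContinuousAt, Filter.tendsto_def]
  intro U hU
  have hUD : U ∩ unitD ∈ 𝓝 (δ w) := Filter.inter_mem hU (unitD_isOpen.mem_nhds hz)
  have himg : γ '' (U ∩ unitD) ∈ 𝓝 w := by
    have := nhds_le_map_nhds_of_inj hd hinj hz
    rw [hγz] at this
    exact this (Filter.image_mem_map hUD)
  filter_upwards [himg] with y hy
  obtain ⟨u, ⟨huU, huD⟩, rfl⟩ := hy
  simp only [Set.mem_preimage, hlr u huD]; exact huU

lemma diffAt_inv_good {γ δ : ℂ → ℂ} (hd : DifferentiableOn ℂ γ unitD)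
    (hinj : Set.InjOn γ unitD) (hδmaps : Set.MapsTo δ unitD unitD)
    (hlr : ∀ z ∈ unitD, δ (γ z) = z) (hrl : ∀ w ∈ unitD, γ (δ w) = w)
    {w : ℂ} (hw : w ∈ unitD) (h0 : deriv γ (δ w) ≠ 0) : DifferentiableAt ℂ δ w := by
  have hA : AnalyticOnNhd ℂ γ unitD := hd.analyticOnNhd unitD_isOpen
  set z := δ w with hzdef
  have hz : z ∈ unitD := hδmaps hw
  have hγz : γ z = w := hrl w hw
  have hsd : HasStrictDerivAt γ (deriv γ z) z := ((hA z hz).contDiffAt (n := 1)).hasStrictDerivAt one_ne_zero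
  set g := hsd.localInverse γ (deriv γ z) z h0 with hgdef
  have hg : HasStrictDerivAt g (deriv γ z)⁻¹ (γ z) := hsd.to_localInverse h0
  have hgz : g (γ z) = z := (hsd.hasStrictFDerivAt_equiv h0).localInverse_apply_image
  have hgc : ContinuousAt g w := by rw [← hγz]; exact hg.hasDerivAt.differentiableAt.continuousAt
  have hev1 : ∀ᶠ y in 𝓝 w, γ (g y) = y := by
    have := (hsd.hasStrictFDerivAt_equiv h0).eventually_right_inverse
    rwa [hγz] at this
  have hev2 : ∀ᶠ y in 𝓝 w, g y ∈ unitD := by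
    have hgw : g w ∈ unitD := by rw [← hγz, hgz]; exact hz
    exact hgc (unitD_isOpen.mem_nhds hgw)
  have heq : δ =ᶠ[𝓝 w] g := by
    filter_upwards [hev1, hev2] with y h1 h2
    have h3 : δ (γ (g y)) = g y := hlr _ h2
    rwa [h1] at h3
  have hgd : DifferentiableAt ℂ g w := by rw [← hγz]; exact hg.hasDerivAt.differentiableAt
  exact heq.differentiableAt_iff.2 hgd

lemma diffOn_inv {γ δ : ℂ → ℂ} (hd : DifferentiableOn ℂ γ unitD)
    (hinj : Set.InjOn γ unitD) (hδmaps : Set.MapsTo δ unitD unitD)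
    (hlr : ∀ z ∈ unitD, δ (γ z) = z) (hrl : ∀ w ∈ unitD, γ (δ w) = w) :
    DifferentiableOn ℂ δ unitD := by
  have hA : AnalyticOnNhd ℂ γ unitD := hd.analyticOnNhd unitD_isOpen
  have hcont : ∀ w ∈ unitD, ContinuousAt δ w := fun w hw =>
    continuousAt_inv_of_inj hd hinj hδmaps hlr hrl hw
  intro w hw
  by_cases h0 : deriv γ (δ w) = 0
  · set z := δ w with hzdef
    have hz : z ∈ unitD := hδmaps hw
    have hγz : γ z = w := hrl w hw
    rcases (hA.deriv z hz).eventually_eq_zero_or_eventually_ne_zero with hzero | hne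
    · exfalso
      have h2 : ∀ᶠ x in 𝓝 z, deriv γ x = 0 ∧ x ∈ unitD :=
        hzero.and (unitD_isOpen.eventually_mem hz)
      rcases Metric.eventually_nhds_iff.1 h2 with ⟨ε, hε, hball⟩
      set ε' := min ε 1 with hε'def
      have hε' : 0 < ε' := lt_min hε one_pos
      have hball' : ∀ x ∈ Metric.ball z ε', deriv γ x = 0 ∧ x ∈ unitD := fun x hx =>
        hball (lt_of_lt_of_le hx (min_le_left _ _))
      have hmemb : z + (ε'/2 : ℝ) ∈ Metric.ball z ε' := by
        rw [Metric.mem_ball, dist_eq_norm]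
        simp only [add_sub_cancel_left, Complex.norm_real, Real.norm_eq_abs]
        rw [abs_of_pos (by positivity)]; linarith
      have hconst : γ (z + (ε'/2 : ℝ)) = γ z := by
        apply (convex_ball z ε').is_const_of_fderivWithin_eq_zero
          (hd.mono fun x hx => (hball' x hx).2)
        · intro x hx
          rw [fderivWithin_of_isOpen Metric.isOpen_ball hx]
          apply ContinuousLinearMap.ext_ring
          rw [ContinuousLinearMap.zero_apply, fderiv_apply_one_eq_deriv, (hball' x hx).1]
        · exact hmemb
        · exact Metric.mem_ball_self hε'
      have hne2 : z + (ε'/2 : ℝ) ≠ z := by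
        simp only [ne_eq, add_eq_left, Complex.ofReal_eq_zero]
        positivity
      exact hne2 (hinj ((hball' _ hmemb).2) hz hconst)
    · have hδc : ContinuousAt δ w := hcont w hw
      have hU : {x | x ≠ z → deriv γ x ≠ 0} ∈ 𝓝 z := eventually_nhdsWithin_iff.1 hne
      have hpre : δ ⁻¹' {x | x ≠ z → deriv γ x ≠ 0} ∈ 𝓝 w := hδc hU
      have hdiff : ∀ᶠ y in 𝓝[≠] w, DifferentiableAt ℂ δ y := by
        rw [eventually_nhdsWithin_iff]
        filter_upwards [hpre, unitD_isOpen.eventually_mem hw] with y h1 h2 hyw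
        have hδy : δ y ≠ z := by
          intro hc
          apply hyw
          have h4 := hrl y h2
          rw [hc, hγz] at h4
          exact h4.symm
        exact diffAt_inv_good hd hinj hδmaps hlr hrl h2 (h1 hδy)
      exact (Complex.analyticAt_of_differentiable_on_punctured_nhds_of_continuousAt hdiff
        (hcont w hw)).differentiableAt.differentiableWithinAt
  · exact (diffAt_inv_good hd hinj hδmaps hlr hrl hw h0).differentiableWithinAt

lemma mobius_normSq_identity (b u : ℂ) :
    Complex.normSq (1 + (starRingEnd ℂ) b * u) - Complex.normSq (u + b)
      = (1 - Complex.normSq b) * (1 - Complex.normSq u) := by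
  simp only [Complex.normSq_apply, Complex.add_re, Complex.add_im, Complex.mul_re, Complex.mul_im,
    Complex.one_re, Complex.one_im, Complex.conj_re, Complex.conj_im]
  ring

lemma mobius_denom_ne (b u : ℂ) (hb : b ∈ unitD) (hu : u ∈ unitD) :
    1 + (starRingEnd ℂ) b * u ≠ 0 := by
  rw [mem_unitD_iff] at hb hu
  intro h
  have h1 : ‖(starRingEnd ℂ) b * u‖ < 1 := by
    rw [norm_mul, Complex.norm_conj]
    calc ‖b‖ * ‖u‖ ≤ ‖b‖ * 1 :=
          mul_le_mul_of_nonneg_left hu.le (norm_nonneg b)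
    _ = ‖b‖ := mul_one _
    _ < 1 := hb
  have h2 : (starRingEnd ℂ) b * u = -1 := by linear_combination h
  rw [h2] at h1
  simp at h1

lemma mobius_maps (b : ℂ) (hb : b ∈ unitD) :
    Set.MapsTo (fun u => (u + b) / (1 + (starRingEnd ℂ) b * u)) unitD unitD := by
  intro u hu
  have hden := mobius_denom_ne b u hb hu
  rw [mem_unitD_iff] at hb hu ⊢
  rw [norm_div, div_lt_one (norm_pos_iff.mpr hden)]
  have key := mobius_normSq_identity b u
  have hb2 : Complex.normSq b < 1 := by rw [← Complex.sq_norm]; nlinarith [norm_nonneg b]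
  have hu2 : Complex.normSq u < 1 := by rw [← Complex.sq_norm]; nlinarith [norm_nonneg u]
  have hlt : Complex.normSq (u + b) < Complex.normSq (1 + (starRingEnd ℂ) b * u) := by nlinarith
  have h1 := Complex.sq_norm (u + b)
  have h2 := Complex.sq_norm (1 + (starRingEnd ℂ) b * u)
  nlinarith [norm_nonneg (u + b), norm_nonneg (1 + (starRingEnd ℂ) b * u)]

lemma mobius_diffOn (b : ℂ) (hb : b ∈ unitD) :
    DifferentiableOn ℂ (fun u => (u + b) / (1 + (starRingEnd ℂ) b * u)) unitD := by
  intro u hu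
  exact ((differentiableAt_id.add_const b).div
    (((differentiableAt_const _).mul differentiableAt_id).const_add 1)
    (mobius_denom_ne b u hb hu)).differentiableWithinAt

lemma pullback_bound {γ δ : ℂ → ℂ}
    (hδd : DifferentiableOn ℂ δ unitD)
    (hδmaps : Set.MapsTo δ unitD unitD)
    (hlr : ∀ z ∈ unitD, δ (γ z) = z)
    (hγ0 : γ 0 ∈ unitD) {a : ℂ} (ha : a ∈ unitD) :
    ‖δ a‖ ≤ ‖a - γ 0‖ / ‖1 - (starRingEnd ℂ) (γ 0) * a‖ := by
  set b := γ 0 with hbdef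
  have hb : b ∈ unitD := hγ0
  have hnb : -b ∈ unitD := by rw [mem_unitD_iff] at hb ⊢; simpa using hb
  have hden1 : 1 - (starRingEnd ℂ) b * a ≠ 0 := by
    have := mobius_denom_ne (-b) a hnb ha
    rwa [map_neg, neg_mul, ← sub_eq_add_neg] at this
  set Ma := (a - b) / (1 - (starRingEnd ℂ) b * a) with hMadef
  have hMa : Ma ∈ unitD := by
    have := mobius_maps (-b) hnb ha
    rw [hMadef]; simpa [sub_eq_add_neg] using this
  have hden2 : 1 + (starRingEnd ℂ) b * Ma ≠ 0 := mobius_denom_ne b Ma hb hMa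
  have hMinv : (Ma + b) / (1 + (starRingEnd ℂ) b * Ma) = a := by
    rw [div_eq_iff hden2]
    have h6 : Ma * (1 - (starRingEnd ℂ) b * a) = a - b := by
      rw [hMadef]; exact div_mul_cancel₀ _ hden1
    linear_combination h6
  set h : ℂ → ℂ := fun u => δ ((u + b) / (1 + (starRingEnd ℂ) b * u)) with hhdef
  have hhd : DifferentiableOn ℂ h unitD := hδd.comp (mobius_diffOn b hb) (mobius_maps b hb)
  have hhmaps : Set.MapsTo h unitD unitD := fun u hu => hδmaps (mobius_maps b hb hu)
  have hh0 : h 0 = 0 := by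
    have h5 : ((0 : ℂ) + b) / (1 + (starRingEnd ℂ) b * 0) = b := by simp
    rw [hhdef]; simp only [h5]; exact hlr 0 zero_mem_unitD
  have hschwarz : ‖h Ma‖ ≤ ‖Ma‖ := by
    apply Complex.norm_le_norm_of_mapsTo_ball hhd (hhmaps.mono_right Metric.ball_subset_closedBall) hh0
    exact mem_unitD_iff.1 hMa
  have heq : h Ma = δ a := by rw [hhdef]; simp only [hMinv]
  rw [heq] at hschwarz
  calc ‖δ a‖ ≤ ‖Ma‖ := hschwarz
  _ = ‖a - b‖ / ‖1 - (starRingEnd ℂ) b * a‖ := by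
      rw [hMadef, norm_div]

lemma stolz_pseudo {ζ a b : ℂ} (hζ : ‖ζ‖ = 1) {k s d : ℝ}
    (hk : 0 < k) (hs : 0 < s) (hs1 : s < 1) (hks : k^2 + s^2 = 1)
    (hd : 0 < d) (hdsmall : d ≤ k * (1 - s))
    (hda : ‖ζ - a‖ = d) (hdb : ‖ζ - b‖ = d)
    (hra : d * k ≤ ((starRingEnd ℂ) ζ * (ζ - a)).re)
    (hrb : d * k ≤ ((starRingEnd ℂ) ζ * (ζ - b)).re) :
    0 < ‖1 - (starRingEnd ℂ) a * b‖ ∧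
    ‖a - b‖ ≤ (2*s/(1+s)) * ‖1 - (starRingEnd ℂ) a * b‖ := by
  have h1 : ζ * (starRingEnd ℂ) ζ = 1 := by
    rw [Complex.mul_conj]
    rw [Complex.normSq_eq_norm_sq, hζ]
    norm_num
  set p := (starRingEnd ℂ) ζ * (ζ - a) with hpdef
  set q := (starRingEnd ℂ) ζ * (ζ - b) with hqdef
  have habs_p : ‖p‖ = d := by
    rw [hpdef, norm_mul, Complex.norm_conj, hζ, one_mul, hda]
  have habs_q : ‖q‖ = d := by
    rw [hqdef, norm_mul, Complex.norm_conj, hζ, one_mul, hdb]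
  have ha' : a = ζ * (1 - p) := by
    rw [hpdef]; linear_combination (ζ - a) * h1
  have hb' : b = ζ * (1 - q) := by
    rw [hqdef]; linear_combination (ζ - b) * h1
  have key1 : a - b = ζ * (q - p) := by
    rw [hpdef, hqdef]; linear_combination (b - a) * h1
  have key2 : 1 - (starRingEnd ℂ) a * b = q + (starRingEnd ℂ) p - (starRingEnd ℂ) p * q := by
    have hca : (starRingEnd ℂ) a = (starRingEnd ℂ) ζ * (1 - (starRingEnd ℂ) p) := by
      rw [ha', map_mul, map_sub, map_one]
    rw [hca, hb']
    linear_combination (-(1 - (starRingEnd ℂ) p) * (1 - q)) * h1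
  have hnp : p.re^2 + p.im^2 = d^2 := by
    have := Complex.sq_norm p
    rw [habs_p, Complex.normSq_apply] at this
    linarith [this]
  have hnq : q.re^2 + q.im^2 = d^2 := by
    have := Complex.sq_norm q
    rw [habs_q, Complex.normSq_apply] at this
    linarith [this]
  have hpre : d * k ≤ p.re := hra
  have hqre : d * k ≤ q.re := hrb
  have stepA2 : Complex.normSq (q - p) ≤ s^2 * Complex.normSq (q + (starRingEnd ℂ) p) := by
    simp only [Complex.normSq_apply, Complex.sub_re, Complex.sub_im, Complex.add_re,
      Complex.add_im, Complex.conj_re, Complex.conj_im]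
    nlinarith [sq_nonneg (p.re*q.im - p.im*q.re), sq_nonneg (p.im*q.re + p.re*q.im),
      sq_nonneg (p.re - q.re), sq_nonneg (p.im + q.im), sq_nonneg (p.im - q.im),
      mul_pos hd hk, sq_nonneg (p.re*q.re - p.im*q.im), sq_nonneg (p.re*q.re + p.im*q.im)]
  have stepA : ‖q - p‖ ≤ s * ‖q + (starRingEnd ℂ) p‖ := by
    have hA := Real.sqrt_le_sqrt stepA2
    rw [← Complex.norm_def] at hA
    rwa [Real.sqrt_mul (sq_nonneg s), Real.sqrt_sq hs.le, ← Complex.norm_def] at hA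
  set M := ‖q + (starRingEnd ℂ) p‖ with hMdef
  have hM1 : 2*(d*k) ≤ M := by
    have h2 : (q + (starRingEnd ℂ) p).re ≤ M := Complex.re_le_norm _
    have h3 : (q + (starRingEnd ℂ) p).re = q.re + p.re := by
      simp [Complex.add_re, Complex.conj_re]
    linarith
  have habspq : ‖(starRingEnd ℂ) p * q‖ = d * d := by
    rw [norm_mul, Complex.norm_conj, habs_p, habs_q]
  have hM2 : M - d^2 ≤ ‖1 - (starRingEnd ℂ) a * b‖ := by
    have h4 := norm_add_le (q + (starRingEnd ℂ) p - (starRingEnd ℂ) p * q)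
      ((starRingEnd ℂ) p * q)
    have h5 : q + (starRingEnd ℂ) p - (starRingEnd ℂ) p * q + (starRingEnd ℂ) p * q
        = q + (starRingEnd ℂ) p := by ring
    rw [h5] at h4
    rw [key2]
    rw [habspq] at h4
    have hdd : d * d = d^2 := by ring
    rw [hdd] at h4
    linarith
  have hpos : 0 < M - d^2 := by nlinarith
  constructor
  · linarith
  · have habs_ab : ‖a - b‖ = ‖q - p‖ := by
      rw [key1, norm_mul, hζ, one_mul]
    rw [habs_ab]
    have hc : 0 ≤ 2*s/(1+s) := by positivity
    calc ‖q - p‖ ≤ s * M := stepA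
    _ ≤ (2*s/(1+s)) * (M - d^2) := by
        rw [div_mul_eq_mul_div, le_div_iff₀ (by linarith)]
        nlinarith [mul_nonneg (mul_nonneg hs.le (by linarith : (0:ℝ) ≤ 1 - s))
            (by linarith : (0:ℝ) ≤ M - 2*(d*k)),
          mul_nonneg (mul_nonneg hs.le hd.le) (by linarith : (0:ℝ) ≤ k*(1-s) - d)]
    _ ≤ (2*s/(1+s)) * ‖1 - (starRingEnd ℂ) a * b‖ := by
        apply mul_le_mul_of_nonneg_left hM2 hc

lemma stolz_re {ζ z : ℂ} (hζ : ‖ζ‖ = 1) {α ρ : ℝ} (hα2 : α < Real.pi/2)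
    (hz : z ∈ stolzAngle ζ α ρ) :
    ‖ζ - z‖ * Real.cos α ≤ ((starRingEnd ℂ) ζ * (ζ - z)).re := by
  obtain ⟨hzD, harg, -⟩ := hz
  have hzlt : ‖z‖ < 1 := by
    simpa [unitD, Metric.mem_ball, Complex.dist_eq] using hzD
  have hne : ζ - z ≠ 0 := by
    intro h
    have : ζ = z := by linear_combination h
    rw [← this, hζ] at hzlt
    exact lt_irrefl _ hzlt
  set r := ‖ζ - z‖ with hrdef
  have hr : 0 < r := norm_pos_iff.mpr hne
  have hζp : ζ = Complex.exp ((Complex.arg ζ : ℂ) * Complex.I) := by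
    have h := Complex.norm_mul_exp_arg_mul_I ζ
    rw [hζ] at h
    simpa using h.symm
  have hzp : ζ - z = (r : ℂ) * Complex.exp ((Complex.arg (ζ - z) : ℂ) * Complex.I) :=
    (Complex.norm_mul_exp_arg_mul_I (ζ - z)).symm
  have hconj : (starRingEnd ℂ) ζ = Complex.exp (-(Complex.arg ζ : ℂ) * Complex.I) := by
    conv_lhs => rw [hζp]
    rw [← Complex.exp_conj]
    congr 1
    rw [map_mul, Complex.conj_ofReal, Complex.conj_I]
    ring
  have hprod : (starRingEnd ℂ) ζ * (ζ - z)
      = (r : ℂ) * Complex.exp (((Complex.arg (ζ - z) - Complex.arg ζ : ℝ) : ℂ) * Complex.I) := by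
    rw [hconj]
    conv_lhs => rw [hzp]
    rw [show Complex.exp (-(Complex.arg ζ : ℂ) * Complex.I) *
        ((r:ℂ) * Complex.exp ((Complex.arg (ζ - z) : ℂ) * Complex.I))
        = (r:ℂ) * (Complex.exp (-(Complex.arg ζ : ℂ) * Complex.I) *
          Complex.exp ((Complex.arg (ζ - z):ℂ) * Complex.I)) from by ring,
      ← Complex.exp_add]
    congr 2
    push_cast
    ring
  have hre : ((starRingEnd ℂ) ζ * (ζ - z)).re
      = r * Real.cos (Complex.arg (ζ - z) - Complex.arg ζ) := by
    rw [hprod, Complex.re_ofReal_mul, Complex.exp_ofReal_mul_I_re]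
  rw [hre]
  have hcos : Real.cos α ≤ Real.cos (Complex.arg (ζ - z) - Complex.arg ζ) := by
    have harg2 : |Complex.arg (ζ - z) - Complex.arg ζ| < α := by
      rwa [abs_sub_comm] at harg
    have hca : Real.cos (Complex.arg (ζ - z) - Complex.arg ζ)
        = Real.cos |Complex.arg (ζ - z) - Complex.arg ζ| := (Real.cos_abs _).symm
    rw [hca]
    exact Real.cos_le_cos_of_nonneg_of_le_pi (abs_nonneg _)
      (by linarith [Real.pi_pos]) harg2.le
  exact mul_le_mul_of_nonneg_left hcos hr.le

/-- If `ζ ∈ Λ_NT`, then the cluster set along any curve landing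
non-tangentially at `ζ` meets `Ω`; in particular so does the angular cluster set. -/
theorem cluster_meets_domain_of_nt (Ω : Set RSphere) (f : ℂ → RSphere)
    (hdom : IsHyperbolicDomain Ω) (hmc : IsMultiplyConnected Ω)
    (hcov : IsUniversalCovering f Ω)
    (ζ : ℂ) (hζ : ζ ∈ ntLimitSet f) :
    (∀ η : ℝ → ℂ, LandsNontangentiallyAt η ζ → (clusterAlong f η ∩ Ω).Nonempty) ∧
    (angularCluster f ζ ∩ Ω).Nonempty := by
  obtain ⟨hζC, γseq, hdeck, hγt, α, ρ, hα0, hα2, hρ0, hγst⟩ := hζ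
  have hζabs : ‖ζ‖ = 1 := by
    simpa [unitC, Complex.dist_eq] using hζC
  have hfc : ContinuousOn f unitD := by
    rw [continuousOn_iff_continuous_restrict]
    exact continuous_subtype_val.comp hcov.covering.continuous
  have main : ∀ η : ℝ → ℂ, LandsNontangentiallyAt η ζ → (clusterAlong f η ∩ Ω).Nonempty := by
    intro η hη
    obtain ⟨⟨hηc, hηm, hηt⟩, α', ρ', hα'0, hα'2, hρ'0, hηev⟩ := hη
    set κ := max α α' with hκdef
    have hκ0 : 0 < κ := lt_of_lt_of_le hα0 (le_max_left _ _)
    have hκ2 : κ < Real.pi/2 := max_lt hα2 hα'2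
    set k := Real.cos κ with hkdef
    set s := Real.sin κ with hsdef
    have hk : 0 < k := Real.cos_pos_of_mem_Ioo ⟨by linarith [Real.pi_pos], hκ2⟩
    have hs : 0 < s := Real.sin_pos_of_pos_of_lt_pi hκ0 (by linarith [Real.pi_pos])
    have hks : k^2 + s^2 = 1 := by
      rw [hkdef, hsdef, add_comm]; exact Real.sin_sq_add_cos_sq κ
    have hs1 : s < 1 := by nlinarith
    set c := 2*s/(1+s) with hcdef
    have hc0 : 0 ≤ c := by positivity
    have hc1 : c < 1 := by rw [hcdef, div_lt_one (by linarith)]; linarith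
    set b : ℕ → ℂ := fun n => γseq n 0 with hbdef
    have hbD : ∀ n, b n ∈ unitD := fun n => (hdeck n).bijOn.mapsTo zero_mem_unitD
    set d : ℕ → ℝ := fun n => ‖ζ - b n‖ with hddef
    have hd0 : ∀ n, 0 < d n := by
      intro n
      have h1 := mem_unitD_iff.1 (hbD n)
      apply norm_pos_iff.mpr
      intro h
      have h2 : ζ = b n := by linear_combination h
      rw [← h2, hζabs] at h1; exact lt_irrefl _ h1
    have hdt : Tendsto d atTop (𝓝 0) := by
      have h1 : Tendsto (fun n => ζ - b n) atTop (𝓝 (ζ - ζ)) := tendsto_const_nhds.sub hγt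
      rw [sub_self] at h1
      have h2 := (continuous_norm.tendsto 0).comp h1
      simpa [hddef, Function.comp_def] using h2
    obtain ⟨l, hl, hIoo⟩ := mem_nhdsLT_iff_exists_Ioo_subset.1 hηev
    set L := max l 0 with hLdef
    have hL1 : L < 1 := max_lt hl one_pos
    have hL0 : 0 ≤ L := le_max_right _ _
    set d₀ := k * (1 - s) with hd₀def
    have hd₀ : 0 < d₀ := by rw [hd₀def]; nlinarith
    have hεx : ∀ j : ℕ, ∃ t, t ∈ Set.Ico (0:ℝ) 1 ∧ 1 - 1/((j:ℝ)+1) ≤ t ∧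
        ∃ z ∈ Metric.closedBall (0:ℂ) c, f (η t) = f z := by
      intro j
      set rj := max L (1 - 1/((j:ℝ)+1)) with hrjdef
      have hrj1 : rj < 1 := by
        apply max_lt hL1
        have h1 : (0:ℝ) < 1/((j:ℝ)+1) := by positivity
        linarith
      set sj := (rj + 1)/2 with hsjdef
      have hrj0 : 0 ≤ rj := le_trans hL0 (le_max_left _ _)
      have hsj0 : 0 ≤ sj := by rw [hsjdef]; linarith
      have hrjsj : rj < sj := by rw [hsjdef]; linarith
      have hsj1 : sj < 1 := by rw [hsjdef]; linarith
      have hsjmem : sj ∈ Set.Ico (0:ℝ) 1 := ⟨hsj0, hsj1⟩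
      have hstolzt : ∀ t, rj < t → t < 1 → η t ∈ stolzAngle ζ α' ρ' := by
        intro t h1 h2
        apply hIoo
        exact ⟨lt_of_le_of_lt (le_trans (le_max_left l 0) (le_max_left L _)) h1, h2⟩
      set ej := ‖ζ - η sj‖ with hejdef
      have hej : 0 < ej := by
        apply norm_pos_iff.mpr
        intro h
        have h2 : ζ = η sj := by linear_combination h
        have h3 := mem_unitD_iff.1 (hηm hsjmem)
        rw [← h2, hζabs] at h3; exact lt_irrefl _ h3
      obtain ⟨n, hn⟩ : ∃ n, d n < min ej d₀ :=
        (hdt.eventually (gt_mem_nhds (lt_min hej hd₀))).exists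
      have hev2 : ∀ᶠ t in 𝓝[<] (1:ℝ), ‖ζ - η t‖ < d n := by
        have h2 : Tendsto (fun t => ζ - η t) (𝓝[<] (1:ℝ)) (𝓝 (ζ - ζ)) :=
          tendsto_const_nhds.sub hηt
        rw [sub_self] at h2
        have h3 := (continuous_norm.tendsto 0).comp h2
        have h4 : ‖(0:ℂ)‖ = 0 := norm_zero
        rw [h4] at h3
        exact h3.eventually (gt_mem_nhds (hd0 n))
      have hev3 : ∀ᶠ t in 𝓝[<] (1:ℝ), t ∈ Set.Ioo sj 1 :=
        Ioo_mem_nhdsLT_of_mem ⟨hsj1, le_refl 1⟩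
      obtain ⟨u, hu1, hu2⟩ := (hev2.and hev3).exists
      have hgc : ContinuousOn (fun t => ‖ζ - η t‖) (Set.Icc sj u) := by
        apply (continuous_norm.comp_continuousOn
          (continuousOn_const.sub (hηc.mono ?_))).mono (le_refl _)
        intro x hx
        exact ⟨le_trans hsj0 hx.1, lt_of_le_of_lt hx.2 hu2.2⟩
      have hdn_mem : d n ∈ Set.Icc (‖ζ - η u‖) (‖ζ - η sj‖) :=
        ⟨hu1.le, le_trans (le_of_lt hn) (min_le_left _ _)⟩
      obtain ⟨t, htmem, htval⟩ := intermediate_value_Icc' hu2.1.le hgc hdn_mem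
      have ht0 : 0 ≤ t := le_trans hsj0 htmem.1
      have ht1 : t < 1 := lt_of_le_of_lt htmem.2 hu2.2
      have htIco : t ∈ Set.Ico (0:ℝ) 1 := ⟨ht0, ht1⟩
      have htrj : rj < t := lt_of_lt_of_le hrjsj htmem.1
      have haD : η t ∈ unitD := hηm htIco
      have hstolza : η t ∈ stolzAngle ζ α' ρ' := hstolzt t htrj ht1
      -- distances
      have hda2 : ‖ζ - η t‖ = d n := htval
      have hdd0 : 0 < d n := hd0 n
      have hddsmall : d n ≤ k * (1 - s) := le_of_lt (lt_of_lt_of_le hn (min_le_right _ _))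
      -- Re bounds
      have hcosα' : k ≤ Real.cos α' := by
        rw [hkdef]
        exact Real.cos_le_cos_of_nonneg_of_le_pi hα'0.le (by linarith [Real.pi_pos])
          (le_max_right _ _)
      have hcosα : k ≤ Real.cos α := by
        rw [hkdef]
        exact Real.cos_le_cos_of_nonneg_of_le_pi hα0.le (by linarith [Real.pi_pos])
          (le_max_left _ _)
      have hrea : d n * k ≤ ((starRingEnd ℂ) ζ * (ζ - η t)).re := by
        have h1 := stolz_re hζabs hα'2 hstolza
        rw [hda2] at h1
        calc d n * k ≤ d n * Real.cos α' := mul_le_mul_of_nonneg_left hcosα' hdd0.le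
        _ ≤ _ := h1
      have hreb : d n * k ≤ ((starRingEnd ℂ) ζ * (ζ - b n)).re := by
        have h1 := stolz_re hζabs hα2 (hγst n)
        have h2 : ‖ζ - b n‖ = d n := rfl
        rw [h2] at h1
        calc d n * k ≤ d n * Real.cos α := mul_le_mul_of_nonneg_left hcosα hdd0.le
        _ ≤ _ := h1
      obtain ⟨hposd, hineq⟩ := stolz_pseudo hζabs hk hs hs1 hks hdd0 hddsmall rfl hda2 hreb hrea
      -- pull back with the deck transformation
      have hbij := (hdeck n).bijOn
      set δ := Function.invFunOn (γseq n) unitD with hδdef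
      have hinv : Set.InvOn δ (γseq n) unitD unitD := hbij.invOn_invFunOn
      have hδbij : Set.BijOn δ unitD unitD := Set.BijOn.symm hinv.symm hbij
      have hδd : DifferentiableOn ℂ δ unitD :=
        diffOn_inv (hdeck n).holo hbij.injOn hδbij.mapsTo
          (fun z hz => hinv.1 hz) (fun w hw => hinv.2 hw)
      have hpb := pullback_bound hδd hδbij.mapsTo (fun z hz => hinv.1 hz) (hbD n) haD
      have habs_sub : ‖η t - b n‖ = ‖b n - η t‖ :=
        norm_sub_rev _ _
      have hδsmall : ‖δ (η t)‖ ≤ c := by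
        have h1 : ‖η t - γseq n 0‖ ≤
            c * ‖1 - (starRingEnd ℂ) (γseq n 0) * η t‖ := by
          have h2 : ‖η t - γseq n 0‖ = ‖b n - η t‖ := habs_sub
          rw [h2]
          exact hineq
        calc ‖δ (η t)‖ ≤ ‖η t - γseq n 0‖ /
              ‖1 - (starRingEnd ℂ) (γseq n 0) * η t‖ := hpb
        _ ≤ c := by
            rw [div_le_iff₀ hposd]
            exact h1
      have hzball : δ (η t) ∈ Metric.closedBall (0:ℂ) c := by
        rw [Metric.mem_closedBall, Complex.dist_eq, sub_zero]
        exact hδsmall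
      have hfeq : f (η t) = f (δ (η t)) := by
        have h1 := (hdeck n).deck (δ (η t)) (hδbij.mapsTo haD)
        rw [hinv.2 haD] at h1
        exact h1
      exact ⟨t, htIco, le_trans (le_trans (by simp [hrjdef] : 1 - 1/((j:ℝ)+1) ≤ rj) hrjsj.le)
        htmem.1, δ (η t), hzball, hfeq⟩
    choose tt htt1 htt2 zz hzz1 hzz2 using hεx
    have hsub : Metric.closedBall (0:ℂ) c ⊆ unitD := by
      intro x hx
      rw [Metric.mem_closedBall, Complex.dist_eq, sub_zero] at hx
      rw [mem_unitD_iff]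
      exact lt_of_le_of_lt hx hc1
    have hKc : IsCompact (f '' Metric.closedBall (0:ℂ) c) :=
      (isCompact_closedBall (0:ℂ) c).image_of_continuousOn (hfc.mono hsub)
    have hKΩ : f '' Metric.closedBall (0:ℂ) c ⊆ Ω := by
      rintro w ⟨x, hx, rfl⟩
      exact hcov.mapsTo (hsub hx)
    have hwmem : ∀ j, f (η (tt j)) ∈ f '' Metric.closedBall (0:ℂ) c := fun j =>
      ⟨zz j, hzz1 j, (hzz2 j).symm⟩
    obtain ⟨w, hwK, φ, hφ, hφt⟩ := hKc.tendsto_subseq hwmem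
    refine ⟨w, ⟨tt ∘ φ, fun n => htt1 (φ n), ?_, hφt⟩, hKΩ hwK⟩
    have hlow : Tendsto (fun n : ℕ => 1 - 1/((n:ℝ)+1)) atTop (𝓝 1) := by
      have h1 := tendsto_one_div_add_atTop_nhds_zero_nat (𝕜 := ℝ)
      have h2 := tendsto_const_nhds (x := (1:ℝ)) (f := atTop (α := ℕ))
      have := h2.sub h1
      simpa using this
    apply tendsto_of_tendsto_of_tendsto_of_le_of_le hlow tendsto_const_nhds
    · intro n
      have h1 : (n:ℝ) + 1 ≤ (φ n : ℝ) + 1 := by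
        have h0 : n ≤ φ n := hφ.le_apply
        have h0' : (n:ℝ) ≤ (φ n:ℝ) := by exact_mod_cast h0
        linarith
      calc 1 - 1/((n:ℝ)+1) ≤ 1 - 1/((φ n:ℝ)+1) := by
            have h2 : 1/((φ n:ℝ)+1) ≤ 1/((n:ℝ)+1) :=
              one_div_le_one_div_of_le (by positivity) h1
            linarith
      _ ≤ (tt ∘ φ) n := htt2 (φ n)
    · intro n
      exact (htt1 (φ n)).2.le
  refine ⟨main, ?_⟩
  have hland : LandsNontangentiallyAt (fun t : ℝ => (t : ℂ) * ζ) ζ := by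
    refine ⟨⟨(Complex.continuous_ofReal.mul continuous_const).continuousOn, ?_, ?_⟩,
      Real.pi/4, 1, by positivity, by linarith [Real.pi_pos], one_pos, ?_⟩
    · intro t ht
      rw [mem_unitD_iff, norm_mul, Complex.norm_real, Real.norm_eq_abs, hζabs, mul_one, _root_.abs_of_nonneg ht.1]
      exact ht.2
    · have hco : Tendsto (fun t : ℝ => (t:ℂ) * ζ) (𝓝 1) (𝓝 (((1:ℝ):ℂ) * ζ)) :=
        (Complex.continuous_ofReal.mul continuous_const).tendsto 1
      have := hco.mono_left (nhdsWithin_le_nhds (s := Set.Iio (1:ℝ)))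
      simpa using this
    · have hev : ∀ᶠ t in 𝓝[<] (1:ℝ), t ∈ Set.Ioo (0:ℝ) 1 :=
        Ioo_mem_nhdsLT_of_mem ⟨one_pos, le_refl 1⟩
      filter_upwards [hev] with t ht
      have hsub2 : ζ - (t:ℂ)*ζ = ((1 - t : ℝ) : ℂ) * ζ := by push_cast; ring
      refine ⟨?_, ?_, ?_⟩
      · rw [mem_unitD_iff, norm_mul, Complex.norm_real, Real.norm_eq_abs, hζabs, mul_one,
          _root_.abs_of_nonneg ht.1.le]
        exact ht.2
      · rw [hsub2, Complex.arg_real_mul _ (by linarith [ht.2] : (0:ℝ) < 1 - t)]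
        simpa using (by positivity : (0:ℝ) < Real.pi/4)
      · rw [hsub2, norm_mul, Complex.norm_real, Real.norm_eq_abs, hζabs, mul_one,
          _root_.abs_of_nonneg (by linarith [ht.2] : (0:ℝ) ≤ 1 - t)]
        linarith [ht.1]
  obtain ⟨w, hw1, hw2⟩ := main _ hland
  refine ⟨w, ?_, hw2⟩
  exact Set.mem_biUnion hland hw1
end
end

section
/- Let Ω ⊊ ℂ̂ be a domain (open connected subset of the Riemann sphere) with non-empty boundary. Then the set of points of ∂Ω that are accessible from Ω is dense in ∂Ω. -/
open Complex Metric Set Filter Topology OnePoint MeasureTheory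

noncomputable section

lemma exit_accessible (Ω : Set RSphere) (hΩ : IsOpen Ω) (c : ℝ → RSphere)
    (hc : ContinuousOn c (Icc 0 1)) (h0 : c 0 ∈ Ω) (h1 : c 1 ∉ Ω) :
    ∃ s ∈ Ioc (0:ℝ) 1, AccessiblePoint Ω (c s) := by
  set S : Set ℝ := {t | t ∈ Icc (0:ℝ) 1 ∧ c t ∉ Ω} with hS
  have hone : (1:ℝ) ∈ S := ⟨⟨by norm_num, le_rfl⟩, h1⟩
  have hne : S.Nonempty := ⟨1, hone⟩
  have hbdd : BddBelow S := ⟨0, fun t ht => ht.1.1⟩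
  set s := sInf S with hsdef
  have hs1 : s ≤ 1 := csInf_le hbdd hone
  have hs0 : 0 ≤ s := le_csInf hne fun t ht => ht.1.1
  have hmem : s ∈ Icc (0:ℝ) 1 := ⟨hs0, hs1⟩
  have hbefore : ∀ t, 0 ≤ t → t < s → c t ∈ Ω := by
    intro t ht0 hts
    by_contra h
    exact absurd (csInf_le hbdd ⟨⟨ht0, hts.le.trans hs1⟩, h⟩) (not_le.2 hts)
  have hsnot : c s ∉ Ω := by
    intro h
    have hcw : ContinuousWithinAt c (Icc 0 1) s := hc s hmem
    have hΩmem : c ⁻¹' Ω ∈ 𝓝[Icc (0:ℝ) 1] s := hcw (hΩ.mem_nhds h)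
    obtain ⟨ε, hε, hball⟩ := Metric.mem_nhdsWithin_iff.1 hΩmem
    obtain ⟨t, htS, htl⟩ := exists_lt_of_csInf_lt hne (show sInf S < s + ε by linarith)
    have hts : s ≤ t := csInf_le hbdd htS
    have : t ∈ Metric.ball s ε ∩ Icc 0 1 := by
      constructor
      · rw [Metric.mem_ball, Real.dist_eq, abs_lt]; constructor <;> linarith
      · exact htS.1
    exact htS.2 (hball this)
  have hspos : 0 < s := by
    rcases hs0.lt_or_eq with h | h
    · exact h
    · exact absurd (h ▸ h0) hsnot
  have hIcoSub : Ico (0:ℝ) s ⊆ Icc 0 1 := fun t ht => ⟨ht.1, ht.2.le.trans hs1⟩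
  have hcws : ContinuousWithinAt c (Ico 0 s) s := (hc s hmem).mono hIcoSub
  have hclos : c s ∈ closure Ω := by
    have hsc : s ∈ closure (Ico (0:ℝ) s) := by
      rw [closure_Ico hspos.ne]
      exact ⟨hs0, le_rfl⟩
    refine closure_mono ?_ (hcws.mem_closure_image hsc)
    rintro _ ⟨t, ht, rfl⟩
    exact hbefore t ht.1 ht.2
  have hfront : c s ∈ frontier Ω := by
    rw [hΩ.frontier_eq]; exact ⟨hclos, hsnot⟩
  refine ⟨s, ⟨hspos, hs1⟩, hfront, fun t => c (s * t), ?_, ?_, ?_⟩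
  · refine hc.comp ((continuous_const.mul continuous_id).continuousOn) ?_
    intro t ht
    exact ⟨mul_nonneg hs0 ht.1, by nlinarith [ht.2.le, ht.1]⟩
  · intro t ht
    exact hbefore _ (mul_nonneg hs0 ht.1) (by nlinarith [ht.2, ht.1])
  · have hmul : Tendsto (fun t : ℝ => s * t) (𝓝[<] 1) (𝓝[Ico (0:ℝ) s] s) := by
      rw [tendsto_nhdsWithin_iff]
      constructor
      · have : Tendsto (fun t : ℝ => s * t) (𝓝 1) (𝓝 s) := by
          simpa using (Continuous.tendsto (by fun_prop : Continuous fun t : ℝ => s * t) 1)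
        exact this.mono_left nhdsWithin_le_nhds
      · filter_upwards [Ioo_mem_nhdsLT_of_mem (show (1:ℝ) ∈ Ioc 0 1 from ⟨one_pos, le_rfl⟩)]
          with t ht
        exact ⟨mul_nonneg hs0 ht.1.le, by nlinarith [ht.2, ht.1]⟩
    exact hcws.tendsto.comp hmul

/-- The accessible boundary points of a domain are dense in its
boundary. -/
theorem accessiblePoints_dense (Ω : Set RSphere)
    (hdom : IsSphDomain Ω) (hne : Ω ≠ univ) (hb : (frontier Ω).Nonempty) :
    frontier Ω ⊆ closure {p : RSphere | AccessiblePoint Ω p} := by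
  have hΩo := hdom.isOpen
  intro p hp
  have hpc : p ∈ closure Ω := frontier_subset_closure hp
  have hpnot : p ∉ Ω := by
    rw [hΩo.frontier_eq] at hp; exact hp.2
  rw [_root_.mem_closure_iff]
  intro U hU hpU
  cases p with
  | none =>
    -- p = ∞
    have hUK := (OnePoint.isOpen_iff_of_mem' (s := U) hpU).1 hU
    obtain ⟨R, hR, hK⟩ := hUK.1.isBounded.subset_closedBall_lt 0 0
    have hUmem : ∀ w : ℂ, R < ‖w‖ → (w : RSphere) ∈ U := by
      intro w hw
      by_contra h
      have : w ∈ Metric.closedBall (0:ℂ) R := hK h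
      rw [Metric.mem_closedBall, dist_zero_right] at this
      linarith
    set O : Set RSphere := (((↑) : ℂ → RSphere) '' Metric.closedBall 0 R)ᶜ with hO
    have hOopen : IsOpen O := OnePoint.isOpen_compl_image_coe.2
      ⟨Metric.isClosed_closedBall, isCompact_closedBall 0 R⟩
    have hinfO : (∞ : RSphere) ∈ O := OnePoint.infty_notMem_image_coe
    obtain ⟨x, hxO, hxΩ⟩ := _root_.mem_closure_iff.1 hpc O hOopen hinfO
    cases x with
    | none => exact absurd hxΩ hpnot
    | some q =>
      have hq : R < ‖q‖ := by
        by_contra h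
        exact hxO ⟨q, by simpa [Metric.mem_closedBall, dist_zero_right] using not_lt.1 h, rfl⟩
      have hq0 : q ≠ 0 := by
        intro h; rw [h, norm_zero] at hq; linarith
      by_cases hray : ∀ t ∈ Ico (0:ℝ) 1, ((q / (1 - (t:ℂ)) : ℂ) : RSphere) ∈ Ω
      · -- the whole ray stays in Ω: ∞ itself is accessible
        refine ⟨∞, hpU, hp, fun t => ((q / (1 - (t:ℂ)) : ℂ) : RSphere), ?_, hray, ?_⟩
        · apply OnePoint.continuous_coe.comp_continuousOn
          apply ContinuousOn.div continuousOn_const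
          · fun_prop
          · intro t ht
            have : (t:ℂ) ≠ 1 := by
              simp only [ne_eq, Complex.ofReal_eq_one]
              exact ht.2.ne
            exact sub_ne_zero.2 (Ne.symm this)
        · have hnorm : Tendsto (fun t : ℝ => ‖(q / (1 - (t:ℂ)))‖) (𝓝[<] 1) atTop := by
            have h1 : Tendsto (fun t : ℝ => 1 - t) (𝓝[<] (1:ℝ)) (𝓝[>] 0) := by
              rw [tendsto_nhdsWithin_iff]
              constructor
              · have : Tendsto (fun t : ℝ => 1 - t) (𝓝 1) (𝓝 0) := by
                  simpa using (Continuous.tendsto (by fun_prop : Continuous fun t : ℝ => 1 - t) 1)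
                exact this.mono_left nhdsWithin_le_nhds
              · filter_upwards [self_mem_nhdsWithin] with t (ht : t < 1)
                simpa using ht
            have h2 : Tendsto (fun t : ℝ => (1 - t)⁻¹) (𝓝[<] (1:ℝ)) atTop :=
              tendsto_inv_nhdsGT_zero.comp h1
            have h3 : Tendsto (fun t : ℝ => ‖q‖ * (1 - t)⁻¹) (𝓝[<] (1:ℝ)) atTop :=
              h2.const_mul_atTop (norm_pos_iff.2 hq0)
            apply h3.congr'
            filter_upwards [self_mem_nhdsWithin] with t (ht : t < 1)
            rw [norm_div]
            have : ‖(1 - (t:ℂ))‖ = 1 - t := by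
              rw [show (1 - (t:ℂ)) = ((1 - t : ℝ) : ℂ) by push_cast; ring,
                Complex.norm_real, Real.norm_eq_abs, abs_of_pos (by linarith)]
            rw [this, div_eq_mul_inv]
          have hcob : Tendsto (fun t : ℝ => (q / (1 - (t:ℂ)))) (𝓝[<] (1:ℝ))
              (Bornology.cobounded ℂ) := tendsto_norm_atTop_iff_cobounded.1 hnorm
          rw [Metric.cobounded_eq_cocompact, ← Filter.coclosedCompact_eq_cocompact] at hcob
          exact OnePoint.tendsto_coe_infty.comp hcob
      · push_neg at hray
        obtain ⟨t0, ht0, hQ⟩ := hray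
        have ht0' : (0:ℝ) < 1 - t0 := by linarith [ht0.2]
        have ht0c : (1 - (t0:ℂ)) ≠ 0 := by
          rw [show (1 - (t0:ℂ)) = ((1 - t0 : ℝ) : ℂ) by push_cast; ring]
          exact_mod_cast ht0'.ne'
        set Q : ℂ := q / (1 - (t0:ℂ)) with hQdef
        set c : ℝ → RSphere := fun t => (((1 - (t:ℂ)) * q + (t:ℂ) * Q : ℂ) : RSphere) with hc
        obtain ⟨s, hsIoc, hacc⟩ := exit_accessible Ω hΩo c
          (by
            apply (OnePoint.continuous_coe.comp (by fun_prop)).continuousOn)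
          (by simpa [hc] using (show ((q:ℂ):RSphere) ∈ Ω from hxΩ))
          (by simpa [hc] using hQ)
        refine ⟨c s, ?_, hacc⟩
        -- c s ∈ U since its norm exceeds R
        have hα : (1 - (s:ℂ)) * q + (s:ℂ) * Q = (((1 - s) + s / (1 - t0) : ℝ) : ℂ) * q := by
          rw [hQdef]
          have : ((1 - t0 : ℝ) : ℂ) ≠ 0 := by exact_mod_cast ht0'.ne'
          push_cast
          field_simp
        have hage : (1:ℝ) ≤ (1 - s) + s / (1 - t0) := by
          have h2 : s ≤ s / (1 - t0) := by
            rw [le_div_iff₀ ht0']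
            nlinarith [hsIoc.1.le, ht0.1, ht0.2]
          linarith
        show (((1 - (s:ℂ)) * q + (s:ℂ) * Q : ℂ) : RSphere) ∈ U
        apply hUmem
        rw [hα, norm_mul, Complex.norm_real, Real.norm_eq_abs,
          abs_of_pos (by linarith : (0:ℝ) < (1 - s) + s / (1 - t0))]
        calc R < ‖q‖ := hq
          _ = 1 * ‖q‖ := (one_mul _).symm
          _ ≤ ((1 - s) + s / (1 - t0)) * ‖q‖ := by
              apply mul_le_mul_of_nonneg_right hage (norm_nonneg q)
  | some z =>
    -- p = (z : ℂ)
    have hzV : z ∈ ((↑) : ℂ → RSphere) ⁻¹' U := hpU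
    obtain ⟨r, hr, hball⟩ := Metric.isOpen_iff.1 (hU.preimage OnePoint.continuous_coe) z hzV
    have hBopen : IsOpen (((↑) : ℂ → RSphere) '' Metric.ball z r) :=
      OnePoint.isOpenMap_coe _ isOpen_ball
    have hpB : (z : RSphere) ∈ ((↑) : ℂ → RSphere) '' Metric.ball z r :=
      ⟨z, Metric.mem_ball_self hr, rfl⟩
    obtain ⟨x, hxB, hxΩ⟩ := _root_.mem_closure_iff.1 hpc _ hBopen hpB
    obtain ⟨q, hqB, rfl⟩ := hxB
    set c : ℝ → RSphere := fun t => (((1 - (t:ℂ)) * q + (t:ℂ) * z : ℂ) : RSphere) with hc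
    obtain ⟨s, hsIoc, hacc⟩ := exit_accessible Ω hΩo c
      (by apply (OnePoint.continuous_coe.comp (by fun_prop)).continuousOn)
      (by simpa [hc] using hxΩ)
      (by simpa [hc] using (show ((z:ℂ):RSphere) ∉ Ω from hpnot))
    refine ⟨c s, ?_, hacc⟩
    show (((1 - (s:ℂ)) * q + (s:ℂ) * z : ℂ) : RSphere) ∈ U
    apply hball
    have := (convex_ball z r) hqB (Metric.mem_ball_self hr)
      (by linarith [hsIoc.2] : (0:ℝ) ≤ 1 - s) hsIoc.1.le (by ring)
    rw [Complex.real_smul, Complex.real_smul] at this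
    simpa using this
end
end
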